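/- arXiv:2306.08974 — 4 statements merged into one kernel-verified Lean document; each statement's English description precedes it below -/
import Mathlib

section
/- Fix Δ, r ∈ ℤ with Δ ≥ 2 and r ≥ 2, and let m ≥ 1 be an integer. Let G = (V, E) be a multihypergraph of maximum degree at most Δ and rank at most r, and let v ∈ V. Then the number of connected subgraphs of G with exactly m edges whose vertex set contains v is at most (e·Δ·(r−1))^m / 2. -/
set_option linter.unusedSectionVars false
set_option linter.deprecated false
set_option linter.unusedVariables false
set_option maxHeartbeats 1000000

def List.get? {α : Type*} (l : List α) (n : ℕ) : Option α := l[n]?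

theorem List.get?_mem {α : Type*} {l : List α} {n : ℕ} {a : α} (h : l.get? n = some a) :
    a ∈ l :=
  List.mem_of_getElem? h

theorem List.get?_eq_some {α : Type*} {l : List α} {n : ℕ} {a : α} :
    l.get? n = some a ↔ ∃ h : n < l.length, l[n] = a :=
  List.getElem?_eq_some_iff

theorem List.get?_append {α : Type*} {l₁ l₂ : List α} {n : ℕ} (h : n < l₁.length) :
    (l₁ ++ l₂).get? n = l₁.get? n :=
  List.getElem?_append_left h

theorem List.get?_of_mem {α : Type*} {l : List α} {a : α} (h : a ∈ l) :
    ∃ n, l.get? n = some a := by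
  obtain ⟨n, hn, e⟩ := List.getElem_of_mem h
  exact ⟨n, by simp [List.get?, hn, e]⟩

theorem List.indexOf_get? {α : Type*} [DecidableEq α] {l : List α} {a : α} (h : a ∈ l) :
    l.get? (l.idxOf a) = some a := by
  rw [List.get?, List.getElem?_eq_some_iff]
  exact ⟨List.idxOf_lt_length_iff.2 h, List.getElem_idxOf _⟩

namespace Stmt1

variable {V Eg : Type*} [DecidableEq V] [DecidableEq Eg]

/-- The vertex set `V(S) = ⋃_{ε ∈ S} ε` of the subgraph of a multihypergraph
determined by a set `S` of edges. -/
def vertexSet (edge : Eg → Finset V) (S : Finset Eg) : Finset V :=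
  S.biUnion edge

/-- A subgraph determined by a set `S` of edges is connected if `S` is nonempty and
any two edges of `S` are joined by a chain of edges of `S` in which consecutive
edges intersect. -/
def ConnectedSub (edge : Eg → Finset V) (S : Finset Eg) : Prop :=
  S.Nonempty ∧ ∀ a ∈ S, ∀ b ∈ S,
    Relation.ReflTransGen (fun x y => x ∈ S ∧ y ∈ S ∧ (edge x ∩ edge y).Nonempty) a b

/-- The degree of a vertex `v`: the number of edges containing `v`. -/
noncomputable def degree [Fintype Eg] (edge : Eg → Finset V) (v : V) : ℕ :=
  Nat.card {e : Eg // v ∈ edge e}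

section Aux


variable [Fintype Eg]

noncomputable def eL (edge : Eg → Finset V) (w : V) : List Eg :=
  (Finset.univ.filter fun e => w ∈ edge e).toList

theorem mem_eL {edge : Eg → Finset V} {w : V} {e : Eg} : e ∈ eL edge w ↔ w ∈ edge e := by
  simp [eL]

noncomputable def cand (edge : Eg → Finset V) (D : ℕ) (t : Eg × V) (j : ℕ) :
    Option (Eg × V) :=
  (((edge t.1).erase t.2).toList.get? (j / D)).bind fun w =>
    ((eL edge w).get? (j % D)).map fun e => (e, w)

noncomputable def rootCand (edge : Eg → Finset V) (v : V) (j : ℕ) : Option (Eg × V) :=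
  ((eL edge v).get? j).map fun e => (e, v)

theorem cand_some {edge : Eg → Finset V} {D : ℕ} {t s : Eg × V} {j : ℕ}
    (h : cand edge D t j = some s) :
    s.2 ∈ edge t.1 ∧ s.2 ≠ t.2 ∧ s.2 ∈ edge s.1 := by
  unfold cand at h
  rcases hw : ((edge t.1).erase t.2).toList.get? (j / D) with _ | w
  · rw [hw] at h; simp at h
  · rw [hw] at h
    simp only [Option.bind_some] at h
    rcases he : (eL edge w).get? (j % D) with _ | e
    · rw [he] at h; simp at h
    · rw [he] at h
      simp only [Option.map_some] at h
      have hs : s = (e, w) := by exact (Option.some.injEq _ _ ▸ h).symm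
      subst hs
      have hw' : w ∈ (edge t.1).erase t.2 := Finset.mem_toList.1 (List.get?_mem hw)
      have he' : e ∈ eL edge w := List.get?_mem he
      exact ⟨(Finset.mem_erase.1 hw').2, (Finset.mem_erase.1 hw').1, mem_eL.1 he'⟩

theorem rootCand_some {edge : Eg → Finset V} {v : V} {s : Eg × V} {j : ℕ}
    (h : rootCand edge v j = some s) : s.2 = v ∧ v ∈ edge s.1 := by
  unfold rootCand at h
  rcases he : (eL edge v).get? j with _ | e
  · rw [he] at h; simp at h
  · rw [he] at h
    simp only [Option.map_some] at h
    have hs : s = (e, v) := by exact (Option.some.injEq _ _ ▸ h).symm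
    subst hs
    exact ⟨rfl, mem_eL.1 (List.get?_mem he)⟩

theorem cand_exists {edge : Eg → Finset V} {D d R : ℕ}
    (hD0 : 0 < D) (hdegN : ∀ w : V, (eL edge w).length ≤ D)
    (hrankN : ∀ e : Eg, (edge e).card ≤ R) (hd : d = D * (R - 1))
    {t : Eg × V} (ht : t.2 ∈ edge t.1) {w : V} (hw : w ∈ edge t.1) (hwne : w ≠ t.2)
    {e' : Eg} (he' : w ∈ edge e') :
    ∃ j ∈ List.range d, cand edge D t j = some (e', w) := by
  have hwl : w ∈ ((edge t.1).erase t.2).toList := by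
    rw [Finset.mem_toList, Finset.mem_erase]; exact ⟨hwne, hw⟩
  have he'l : e' ∈ eL edge w := mem_eL.2 he'
  set l := ((edge t.1).erase t.2).toList with hldef
  set a := l.idxOf w with hadef
  set b := (eL edge w).idxOf e' with hbdef
  have hb : b < D := lt_of_lt_of_le (List.idxOf_lt_length_iff.2 he'l) (hdegN w)
  have ha : a + 1 ≤ R - 1 := by
    have h1 : a < l.length := List.idxOf_lt_length_iff.2 hwl
    have h2 : l.length = (edge t.1).card - 1 := by
      rw [hldef, Finset.length_toList, Finset.card_erase_of_mem ht]
    have h3 : (edge t.1).card ≤ R := hrankN t.1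
    omega
  refine ⟨D * a + b, ?_, ?_⟩
  · rw [List.mem_range, hd]
    calc D * a + b < D * a + D := by omega
      _ = D * (a + 1) := by ring
      _ ≤ D * (R - 1) := Nat.mul_le_mul_left _ ha
  · unfold cand
    rw [Nat.mul_add_div hD0, Nat.div_eq_of_lt hb, Nat.add_zero, Nat.mul_add_mod,
      Nat.mod_eq_of_lt hb]
    rw [← hldef, List.indexOf_get? hwl]
    simp only [Option.bind_some]
    rw [List.indexOf_get? he'l]
    simp

theorem rootCand_exists {edge : Eg → Finset V} {D d R : ℕ} {v : V}
    (hdegN : ∀ w : V, (eL edge w).length ≤ D)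
    (hd : d = D * (R - 1)) (hR : 2 ≤ R)
    {e' : Eg} (he' : v ∈ edge e') :
    ∃ j ∈ List.range d, rootCand edge v j = some (e', v) := by
  have he'l : e' ∈ eL edge v := mem_eL.2 he'
  refine ⟨(eL edge v).idxOf e', ?_, ?_⟩
  · rw [List.mem_range, hd]
    calc (eL edge v).idxOf e' < (eL edge v).length := List.idxOf_lt_length_iff.2 he'l
      _ ≤ D := hdegN v
      _ = D * 1 := (mul_one D).symm
      _ ≤ D * (R - 1) := Nat.mul_le_mul_left _ (by omega)
  · unfold rootCand
    rw [List.indexOf_get? he'l]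
    simp



theorem filter_sublist_eq {α : Type*} [DecidableEq α] :
    ∀ {l L : List α}, l.Sublist L → L.Nodup → L.filter (fun x => decide (x ∈ l)) = l := by
  intro l L h
  induction h with
  | slnil => simp
  | @cons l₁ l₂ a h ih =>
    intro hnd
    rw [List.filter_cons]
    have ha : a ∉ l₁ := fun hm => (List.nodup_cons.1 hnd).1 (h.subset hm)
    simp only [ha, decide_eq_true_eq, if_neg, not_false_iff]
    exact ih (List.nodup_cons.1 hnd).2
  | @cons_cons l₁ l₂ a h ih =>
    intro hnd
    rw [List.filter_cons]
    simp only [List.mem_cons, true_or, decide_eq_true_eq, if_pos]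
    have hrest : ∀ x ∈ l₂, (decide (x = a ∨ x ∈ l₁) = decide (x ∈ l₁)) := by
      intro x hx
      have hxa : x ≠ a := fun hh => (List.nodup_cons.1 hnd).1 (hh ▸ hx)
      simp [hxa]
    rw [List.filter_congr hrest, ih (List.nodup_cons.1 hnd).2]


noncomputable def selAux (S : Finset Eg) (c : ℕ → Option (Eg × V)) :
    List ℕ → Finset Eg → List (ℕ × (Eg × V))
  | [], _ => []
  | j :: js, F =>
    (c j).elim (selAux S c js F) fun t =>
      if t.1 ∈ S ∧ t.1 ∉ F then (j, t) :: selAux S c js (insert t.1 F)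
      else selAux S c js F

theorem selAux_mem {S : Finset Eg} {c : ℕ → Option (Eg × V)} :
    ∀ {l : List ℕ} {F : Finset Eg} {p}, p ∈ selAux S c l F →
      c p.1 = some p.2 ∧ p.2.1 ∈ S ∧ p.2.1 ∉ F := by
  intro l
  induction l with
  | nil => intro F p hp; simp [selAux] at hp
  | cons j js ih =>
    intro F p hp
    rw [selAux] at hp
    rcases hc : c j with _ | t
    · rw [hc] at hp; exact ih hp
    · rw [hc] at hp
      simp only [Option.elim] at hp
      by_cases hsel : t.1 ∈ S ∧ t.1 ∉ F
      · rw [if_pos hsel] at hp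
        rcases List.mem_cons.1 hp with h | h
        · subst h; exact ⟨hc, hsel.1, hsel.2⟩
        · have := ih h
          exact ⟨this.1, this.2.1, fun hF => this.2.2 (Finset.mem_insert_of_mem hF)⟩
      · rw [if_neg hsel] at hp; exact ih hp

theorem selAux_fst_sublist {S : Finset Eg} {c : ℕ → Option (Eg × V)} :
    ∀ {l : List ℕ} {F : Finset Eg}, ((selAux S c l F).map Prod.fst).Sublist l := by
  intro l
  induction l with
  | nil => intro F; simp [selAux]
  | cons j js ih =>
    intro F
    rw [selAux]
    rcases hc : c j with _ | t
    · exact (ih (F := F)).cons j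
    · simp only [Option.elim]
      by_cases hsel : t.1 ∈ S ∧ t.1 ∉ F
      · rw [if_pos hsel, List.map_cons]
        exact (ih).cons₂ j
      · rw [if_neg hsel]; exact (ih).cons j

theorem selAux_edges_nodup {S : Finset Eg} {c : ℕ → Option (Eg × V)} :
    ∀ {l : List ℕ} {F : Finset Eg}, ((selAux S c l F).map (fun p => p.2.1)).Nodup := by
  intro l
  induction l with
  | nil => intro F; simp [selAux]
  | cons j js ih =>
    intro F
    rw [selAux]
    rcases hc : c j with _ | t
    · exact ih
    · simp only [Option.elim]
      by_cases hsel : t.1 ∈ S ∧ t.1 ∉ F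
      · rw [if_pos hsel, List.map_cons, List.nodup_cons]
        refine ⟨fun hmem => ?_, ih⟩
        rcases List.mem_map.1 hmem with ⟨p, hp, hpe⟩
        exact (selAux_mem hp).2.2 (hpe ▸ Finset.mem_insert_self _ _)
      · rw [if_neg hsel]; exact ih

theorem selAux_complete {S : Finset Eg} {c : ℕ → Option (Eg × V)} :
    ∀ {l : List ℕ} {F : Finset Eg} {j : ℕ}, j ∈ l → ∀ {t}, c j = some t → t.1 ∈ S →
      t.1 ∈ F ∨ t.1 ∈ (selAux S c l F).map (fun p => p.2.1) := by
  intro l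
  induction l with
  | nil => intro F j hj; simp at hj
  | cons j' js ih =>
    intro F j hj t hc htS
    rw [selAux]
    rcases List.mem_cons.1 hj with rfl | hj
    · rw [hc]
      simp only [Option.elim]
      by_cases hsel : t.1 ∈ S ∧ t.1 ∉ F
      · rw [if_pos hsel]; right; simp
      · rw [if_neg hsel]
        left
        by_contra hF
        exact hsel ⟨htS, hF⟩
    · rcases hc' : c j' with _ | t'
      · exact ih hj hc htS
      · simp only [Option.elim]
        by_cases hsel : t'.1 ∈ S ∧ t'.1 ∉ F
        · rw [if_pos hsel]
          rcases ih (F := insert t'.1 F) hj hc htS with h | h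
          · rcases Finset.mem_insert.1 h with h' | h'
            · right; simp [h']
            · exact Or.inl h'
          · right; rw [List.map_cons]; exact List.mem_cons_of_mem _ h
        · rw [if_neg hsel]; exact ih hj hc htS

theorem filterMap_map_fst {α : Type*} {c : ℕ → Option α} :
    ∀ {ll : List (ℕ × α)}, (∀ p ∈ ll, c p.1 = some p.2) →
      (ll.map Prod.fst).filterMap c = ll.map Prod.snd := by
  intro ll
  induction ll with
  | nil => simp
  | cons p ps ih =>
    intro h
    simp only [List.map_cons, List.filterMap_cons, h p List.mem_cons_self]
    rw [ih fun q hq => h q (List.mem_cons_of_mem _ hq)]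



variable (edge : Eg → Finset V) (D d : ℕ) (v : V) (S : Finset Eg)

noncomputable def encStep (L : List (Eg × V)) (k : ℕ) : List (ℕ × (Eg × V)) :=
  (L.get? k).elim [] fun t =>
    selAux S (cand edge D t) (List.range d) (L.map Prod.fst).toFinset

noncomputable def encRun : ℕ → List (Eg × V)
  | 0 => (selAux S (rootCand edge v) (List.range d) ∅).map Prod.snd
  | k+1 => encRun k ++ (encStep edge D d S (encRun k) k).map Prod.snd

noncomputable def encBlock : ℕ → List ℕ
  | 0 => (selAux S (rootCand edge v) (List.range d) ∅).map Prod.fst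
  | k+1 => (encStep edge D d S (encRun edge D d v S k) k).map Prod.fst

noncomputable def encSlots (K : ℕ) : Finset ℕ :=
  (Finset.range (K+1)).biUnion fun i =>
    ((encBlock edge D d v S i).map (fun j => i * d + j)).toFinset

noncomputable def decRun (A : Finset ℕ) : ℕ → List (Eg × V)
  | 0 => ((List.range d).filter fun j => j ∈ A).filterMap (rootCand edge v)
  | k+1 =>
    decRun A k ++
      ((decRun A k).get? k).elim [] fun t =>
        ((List.range d).filter fun j => (k+1) * d + j ∈ A).filterMap (cand edge D t)

theorem encRun_get?_mono {k i : ℕ} {t : Eg × V}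
    (h : (encRun edge D d v S k).get? i = some t) (k' : ℕ) (hk : k ≤ k') :
    (encRun edge D d v S k').get? i = some t := by
  induction k' with
  | zero => have : k = 0 := by omega
            subst this; exact h
  | succ k' ih =>
    rcases Nat.lt_or_ge k (k'+1) with hlt | hge
    · have hik := ih (by omega)
      have hi : i < (encRun edge D d v S k').length := (List.get?_eq_some.1 hik).1
      rw [encRun, List.get?_append hi]
      exact hik
    · have : k = k' + 1 := by omega
      subst this; exact h

theorem encBlock_subset_range {i : ℕ} : ∀ j ∈ encBlock edge D d v S i, j < d := by
  intro j hj
  have : j ∈ List.range d := by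
    cases i with
    | zero => exact (selAux_fst_sublist).subset hj
    | succ k =>
      rw [encBlock] at hj
      unfold encStep at hj
      rcases ht : (encRun edge D d v S k).get? k with _ | t
      · rw [ht] at hj; simp at hj
      · rw [ht] at hj
        simp only [Option.elim] at hj
        exact (selAux_fst_sublist).subset hj
  simpa using this

theorem encRun_length (k : ℕ) :
    (encRun edge D d v S (k+1)).length =
      (encRun edge D d v S k).length + (encBlock edge D d v S (k+1)).length := by
  rw [encRun, List.length_append, List.length_map, encBlock, List.length_map]

theorem encRun_zero_length :
    (encRun edge D d v S 0).length = (encBlock edge D d v S 0).length := by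
  rw [encRun, encBlock, List.length_map, List.length_map]


theorem encRun_inv (R : ℕ) (hD0 : 0 < D)
    (hdegN : ∀ w : V, (eL edge w).length ≤ D)
    (hrankN : ∀ e : Eg, (edge e).card ≤ R)
    (hd : d = D * (R - 1)) (hR : 2 ≤ R) (k : ℕ) :
    (∀ t ∈ encRun edge D d v S k, t.1 ∈ S ∧ t.2 ∈ edge t.1) ∧
    ((encRun edge D d v S k).map Prod.fst).Nodup ∧
    (∀ e' ∈ S, v ∈ edge e' → e' ∈ (encRun edge D d v S k).map Prod.fst) ∧
    (∀ i, i < k → ∀ t, (encRun edge D d v S k).get? i = some t →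
      ∀ w ∈ edge t.1, w ≠ t.2 → ∀ e' ∈ S, w ∈ edge e' →
        e' ∈ (encRun edge D d v S k).map Prod.fst) ∧
    (∀ t ∈ encRun edge D d v S k, t.2 = v ∨
      ∃ t' ∈ encRun edge D d v S k, t.2 ∈ edge t'.1 ∧ t.2 ≠ t'.2) := by
  induction k with
  | zero =>
    have hLdef : encRun edge D d v S 0
        = (selAux S (rootCand edge v) (List.range d) ∅).map Prod.snd := rfl
    refine ⟨?_, ?_, ?_, ?_, ?_⟩
    · intro t ht
      rcases List.mem_map.1 (hLdef ▸ ht) with ⟨p, hp, rfl⟩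
      have h := selAux_mem hp
      have h2 := rootCand_some h.1
      exact ⟨h.2.1, h2.1 ▸ h2.2⟩
    · rw [hLdef, List.map_map]
      exact selAux_edges_nodup
    · intro e' he' hv'
      obtain ⟨j, hj, hcj⟩ := rootCand_exists (D := D) (d := d) (R := R) hdegN hd hR hv'
      rcases selAux_complete (F := ∅) hj hcj he' with hF | hsel
      · simp at hF
      · rw [hLdef, List.map_map]; exact hsel
    · intro i hi; omega
    · intro t ht
      rcases List.mem_map.1 (hLdef ▸ ht) with ⟨p, hp, rfl⟩
      exact Or.inl (rootCand_some (selAux_mem hp).1).1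
  | succ k ih =>
    obtain ⟨I1, I2, I3, I4, I5⟩ := ih
    rcases ht0 : (encRun edge D d v S k).get? k with _ | t
    · have hL' : encRun edge D d v S (k+1) = encRun edge D d v S k := by
        rw [encRun]; unfold encStep; rw [ht0]; simp
      rw [hL']
      refine ⟨I1, I2, I3, ?_, I5⟩
      intro i hi t'' hget w hw hwne e' he' hwe'
      rcases Nat.lt_or_ge i k with hik | hik
      · exact I4 i hik t'' hget w hw hwne e' he' hwe'
      · have : i = k := by omega
        subst this
        rw [ht0] at hget; cases hget
    · have htL : t ∈ encRun edge D d v S k := List.get?_mem ht0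
      have hklen : k < (encRun edge D d v S k).length := (List.get?_eq_some.1 ht0).1
      have hL' : encRun edge D d v S (k+1) = encRun edge D d v S k ++
          (selAux S (cand edge D t) (List.range d)
            ((encRun edge D d v S k).map Prod.fst).toFinset).map Prod.snd := by
        rw [encRun]; unfold encStep; rw [ht0]; rfl
      set L := encRun edge D d v S k with hLdef
      set F := (L.map Prod.fst).toFinset with hFdef
      set sel := selAux S (cand edge D t) (List.range d) F with hseldef
      have hnew : ∀ p ∈ sel, cand edge D t p.1 = some p.2 ∧ p.2.1 ∈ S ∧ p.2.1 ∉ F :=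
        fun p hp => selAux_mem hp
      refine ⟨?_, ?_, ?_, ?_, ?_⟩
      · intro t'' ht''
        rw [hL'] at ht''
        rcases List.mem_append.1 ht'' with h | h
        · exact I1 t'' h
        · rcases List.mem_map.1 h with ⟨p, hp, rfl⟩
          exact ⟨(hnew p hp).2.1, (cand_some (hnew p hp).1).2.2⟩
      · rw [hL', List.map_append, List.map_map, List.nodup_append]
        refine ⟨I2, selAux_edges_nodup, ?_⟩
        intro a ha _ ha' rfl
        rcases List.mem_map.1 ha' with ⟨p, hp, hpa⟩
        refine (hnew p hp).2.2 (List.mem_toFinset.2 ?_)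
        show (Prod.fst ∘ Prod.snd) p ∈ L.map Prod.fst
        rw [hpa]; exact ha
      · intro e' he' hv'
        rw [hL', List.map_append]
        exact List.mem_append_left _ (I3 e' he' hv')
      · intro i hi t'' hget w hw hwne e' he' hwe'
        rcases Nat.lt_or_ge i k with hik | hik
        · have hi' : i < L.length := lt_trans hik hklen
          rw [hL', List.get?_append hi'] at hget
          rw [hL', List.map_append]
          exact List.mem_append_left _ (I4 i hik t'' hget w hw hwne e' he' hwe')
        · have hik' : i = k := by omega
          subst hik'
          rw [hL', List.get?_append hklen, ht0] at hget
          injection hget with hinj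
          subst hinj
          have htedge : t.2 ∈ edge t.1 := (I1 t htL).2
          obtain ⟨j, hj, hcj⟩ :=
            cand_exists hD0 hdegN hrankN hd htedge hw hwne hwe'
          rcases selAux_complete (F := F) hj hcj he' with hF | hsel
          · rw [hL', List.map_append]
            exact List.mem_append_left _ (List.mem_toFinset.1 hF)
          · rw [hL', List.map_append, List.map_map]
            exact List.mem_append_right _ hsel
      · intro t'' ht''
        rw [hL'] at ht''
        rcases List.mem_append.1 ht'' with h | h
        · rcases I5 t'' h with h' | ⟨t', ht', h'⟩
          · exact Or.inl h'
          · exact Or.inr ⟨t', by rw [hL']; exact List.mem_append_left _ ht', h'⟩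
        · rcases List.mem_map.1 h with ⟨p, hp, rfl⟩
          have hc := cand_some (hnew p hp).1
          exact Or.inr ⟨t, by rw [hL']; exact List.mem_append_left _ htL, hc.1, hc.2.1⟩


def vertexSet' (edge : Eg → Finset V) (S : Finset Eg) : Finset V := S.biUnion edge

def ConnectedSub' (edge : Eg → Finset V) (S : Finset Eg) : Prop :=
  S.Nonempty ∧ ∀ a ∈ S, ∀ b ∈ S,
    Relation.ReflTransGen (fun x y => x ∈ S ∧ y ∈ S ∧ (edge x ∩ edge y).Nonempty) a b

theorem encRun_closed (R : ℕ) (hD0 : 0 < D)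
    (hdegN : ∀ w : V, (eL edge w).length ≤ D)
    (hrankN : ∀ e : Eg, (edge e).card ≤ R)
    (hd : d = D * (R - 1)) (hR : 2 ≤ R) (k : ℕ)
    (hlen : (encRun edge D d v S k).length ≤ k)
    (hconn : ConnectedSub' edge S) (hv : v ∈ vertexSet' edge S) :
    ∀ e' ∈ S, e' ∈ (encRun edge D d v S k).map Prod.fst := by
  obtain ⟨I1, I2, I3, I4, I5⟩ := encRun_inv edge D d v S R hD0 hdegN hrankN hd hR k
  set L := encRun edge D d v S k with hLdef
  have idxlt : ∀ t ∈ L, ∃ i, i < k ∧ L.get? i = some t := by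
    intro t ht
    obtain ⟨i, hi⟩ := List.get?_of_mem ht
    exact ⟨i, lt_of_lt_of_le (List.get?_eq_some.1 hi).1 hlen, hi⟩
  -- the key step property
  have key : ∀ b c : Eg, b ∈ L.map Prod.fst → c ∈ S → (edge b ∩ edge c).Nonempty →
      c ∈ L.map Prod.fst := by
    intro b c hb hc hbc
    obtain ⟨w, hw⟩ := hbc
    have hwb : w ∈ edge b := (Finset.mem_inter.1 hw).1
    have hwc : w ∈ edge c := (Finset.mem_inter.1 hw).2
    rcases List.mem_map.1 hb with ⟨tb, htb, rfl⟩
    by_cases hwe : w = tb.2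
    · rcases I5 tb htb with h | ⟨t', ht', hwt'⟩
      · exact I3 c hc (by rw [← h, ← hwe]; exact hwc)
      · obtain ⟨i', hi', hget'⟩ := idxlt t' ht'
        exact I4 i' hi' t' hget' w (hwe ▸ hwt'.1) (hwe ▸ hwt'.2) c hc hwc
    · obtain ⟨i, hi, hget⟩ := idxlt tb htb
      exact I4 i hi tb hget w hwb hwe c hc hwc
  -- starting edge
  obtain ⟨e₀, he₀S, hve₀⟩ := Finset.mem_biUnion.1 hv
  have he₀L : e₀ ∈ L.map Prod.fst := I3 e₀ he₀S hve₀
  intro e' he'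
  have hchain := hconn.2 e₀ he₀S e' he'
  clear he'
  induction hchain with
  | refl => exact he₀L
  | tail hab hbc ihh =>
    exact key _ _ ihh hbc.2.1 hbc.2.2

theorem encRun_final (R m : ℕ) (hD0 : 0 < D)
    (hdegN : ∀ w : V, (eL edge w).length ≤ D)
    (hrankN : ∀ e : Eg, (edge e).card ≤ R)
    (hd : d = D * (R - 1)) (hR : 2 ≤ R) (hm : 1 ≤ m)
    (hconn : ConnectedSub' edge S) (hcard : S.card = m) (hv : v ∈ vertexSet' edge S) :
    ((encRun edge D d v S (m-1)).map Prod.fst).toFinset = S ∧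
      (encRun edge D d v S (m-1)).length = m := by
  obtain ⟨I1, I2, I3, I4, I5⟩ := encRun_inv edge D d v S R hD0 hdegN hrankN hd hR (m-1)
  set L := encRun edge D d v S (m-1) with hLdef
  have hsub : (L.map Prod.fst).toFinset ⊆ S := by
    intro a ha
    rcases List.mem_map.1 (List.mem_toFinset.1 ha) with ⟨t, ht, rfl⟩
    exact (I1 t ht).1
  have hcardL : (L.map Prod.fst).toFinset.card = L.length := by
    rw [List.toFinset_card_of_nodup I2, List.length_map]
  by_cases hlen : L.length ≤ m - 1
  · have hclosed := encRun_closed edge D d v S R hD0 hdegN hrankN hd hR (m-1) hlen hconn hv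
    have hSsub : S ⊆ (L.map Prod.fst).toFinset := fun e' he' =>
      List.mem_toFinset.2 (hclosed e' he')
    have heq : (L.map Prod.fst).toFinset = S := le_antisymm hsub hSsub
    have : m ≤ m - 1 := by
      calc m = S.card := hcard.symm
        _ = (L.map Prod.fst).toFinset.card := by rw [heq]
        _ = L.length := hcardL
        _ ≤ m - 1 := hlen
    omega
  · push_neg at hlen
    have h1 : L.length ≤ m := by
      calc L.length = (L.map Prod.fst).toFinset.card := hcardL.symm
        _ ≤ S.card := Finset.card_le_card hsub
        _ = m := hcard
    have h2 : L.length = m := by omega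
    refine ⟨Finset.eq_of_subset_of_card_le hsub ?_, h2⟩
    rw [hcardL, h2, hcard]


theorem slot_inj {d : ℕ} (hd0 : 0 < d) {i i' j j' : ℕ} (hj : j < d) (hj' : j' < d)
    (h : i * d + j = i' * d + j') : i = i' ∧ j = j' := by
  have e1 : (d * i + j) / d = i := by
    rw [Nat.mul_add_div hd0, Nat.div_eq_of_lt hj, Nat.add_zero]
  have e2 : (d * i' + j') / d = i' := by
    rw [Nat.mul_add_div hd0, Nat.div_eq_of_lt hj', Nat.add_zero]
  have h' : d * i + j = d * i' + j' := by
    rw [Nat.mul_comm d i, Nat.mul_comm d i']; exact h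
  have : i = i' := by rw [← e1, ← e2, h']
  subst this
  exact ⟨rfl, by omega⟩

theorem encBlock_nodup (i : ℕ) : (encBlock edge D d v S i).Nodup := by
  have : (encBlock edge D d v S i).Sublist (List.range d) := by
    cases i with
    | zero => exact selAux_fst_sublist
    | succ k =>
      rw [encBlock]; unfold encStep
      rcases ht : (encRun edge D d v S k).get? k with _ | t
      · simp
      · simp only [Option.elim]
        exact selAux_fst_sublist
  exact this.nodup List.nodup_range

theorem encSlots_mem (hd0 : 0 < d) {K i j : ℕ} (hj : j < d) :
    i * d + j ∈ encSlots edge D d v S K ↔ i ≤ K ∧ j ∈ encBlock edge D d v S i := by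
  constructor
  · intro h
    rcases Finset.mem_biUnion.1 h with ⟨i', hi', hmem⟩
    rcases List.mem_map.1 (List.mem_toFinset.1 hmem) with ⟨j', hj'm, hj'⟩
    have hj'd : j' < d := encBlock_subset_range edge D d v S j' hj'm
    obtain ⟨hii, hjj⟩ := slot_inj hd0 hj'd hj hj'
    rw [← hii, ← hjj]
    exact ⟨by simpa using Nat.lt_succ_iff.mp (Finset.mem_range.1 hi'), hj'm⟩
  · intro ⟨hiK, hjm⟩
    refine Finset.mem_biUnion.2 ⟨i, Finset.mem_range.2 (by omega), ?_⟩
    exact List.mem_toFinset.2 (List.mem_map.2 ⟨j, hjm, rfl⟩)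

theorem block_decode {S : Finset Eg} {c : ℕ → Option (Eg × V)} {F : Finset Eg} {d : ℕ} :
    ((List.range d).filter
        (fun j => decide (j ∈ (selAux S c (List.range d) F).map Prod.fst))).filterMap c
      = (selAux S c (List.range d) F).map Prod.snd := by
  rw [filter_sublist_eq selAux_fst_sublist List.nodup_range,
    filterMap_map_fst fun p hp => (selAux_mem hp).1]

theorem decRun_encSlots (hd0 : 0 < d) (K : ℕ) :
    ∀ k, k ≤ K → decRun edge D d v (encSlots edge D d v S K) k = encRun edge D d v S k := by
  intro k
  induction k with
  | zero =>
    intro hk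
    rw [decRun, encRun]
    have hcongr : ∀ j ∈ List.range d,
        (decide (j ∈ encSlots edge D d v S K))
          = decide (j ∈ encBlock edge D d v S 0) := by
      intro j hjr
      have hj : j < d := List.mem_range.1 hjr
      have := encSlots_mem edge D d v S hd0 (K := K) (i := 0) hj
      rw [Nat.zero_mul, Nat.zero_add] at this
      simp only [decide_eq_decide, this]
      exact ⟨fun h => h.2, fun h => ⟨Nat.zero_le _, h⟩⟩
    rw [List.filter_congr hcongr]
    exact block_decode
  | succ k ih =>
    intro hk
    have ihk := ih (by omega)
    rw [decRun, ihk, encRun]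
    congr 1
    rcases ht : (encRun edge D d v S k).get? k with _ | t
    · unfold encStep; rw [ht]; rfl
    · unfold encStep; rw [ht]
      simp only [Option.elim]
      have hcongr : ∀ j ∈ List.range d,
          (decide ((k+1) * d + j ∈ encSlots edge D d v S K))
            = decide (j ∈ encBlock edge D d v S (k+1)) := by
        intro j hjr
        have hj : j < d := List.mem_range.1 hjr
        have := encSlots_mem edge D d v S hd0 (K := K) (i := k+1) hj
        simp only [decide_eq_decide, this]
        exact ⟨fun h => h.2, fun h => ⟨by omega, h⟩⟩
      rw [List.filter_congr hcongr]
      have hblock : encBlock edge D d v S (k+1) =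
          (selAux S (cand edge D t) (List.range d)
            ((encRun edge D d v S k).map Prod.fst).toFinset).map Prod.fst := by
        rw [encBlock]; unfold encStep; rw [ht]; rfl
      rw [hblock]
      exact block_decode

theorem encSlots_card (hd0 : 0 < d) (K : ℕ) :
    (encSlots edge D d v S K).card = (encRun edge D d v S K).length := by
  rw [encSlots, Finset.card_biUnion]
  · have hcard : ∀ i, ((encBlock edge D d v S i).map (fun j => i * d + j)).toFinset.card
        = (encBlock edge D d v S i).length := by
      intro i
      rw [List.toFinset_card_of_nodup, List.length_map]
      exact (encBlock_nodup edge D d v S i).map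
        (fun a b hab => by omega)
    induction K with
    | zero =>
      rw [Finset.sum_range_succ, Finset.sum_range_zero, Nat.zero_add, hcard,
        encRun_zero_length]
    | succ K ihK =>
      rw [Finset.sum_range_succ, ihK, hcard, encRun_length]
  · intro x hx y hy hxy
    simp only [Finset.disjoint_left]
    intro a ha ha'
    rcases List.mem_map.1 (List.mem_toFinset.1 ha) with ⟨j, hjm, hj⟩
    rcases List.mem_map.1 (List.mem_toFinset.1 ha') with ⟨j', hjm', hj'⟩
    have hjd : j < d := encBlock_subset_range edge D d v S j hjm
    have hjd' : j' < d := encBlock_subset_range edge D d v S j' hjm'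
    exact hxy (slot_inj hd0 hjd hjd' (by rw [hj, hj'])).1

theorem encSlots_subset (K : ℕ) :
    encSlots edge D d v S K ⊆ Finset.range ((K+1) * d) := by
  intro a ha
  rcases Finset.mem_biUnion.1 ha with ⟨i, hi, hmem⟩
  rcases List.mem_map.1 (List.mem_toFinset.1 hmem) with ⟨j, hjm, hj⟩
  have hjd : j < d := encBlock_subset_range edge D d v S j hjm
  have hiK : i ≤ K := Nat.lt_succ_iff.mp (Finset.mem_range.1 hi)
  rw [Finset.mem_range, ← hj]
  calc i * d + j < i * d + d := by omega
    _ = (i + 1) * d := by ring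
    _ ≤ (K + 1) * d := Nat.mul_le_mul_right _ (by omega)


theorem fact_bound (m : ℕ) (hm : 1 ≤ m) :
    2 * (m : ℝ) ^ m ≤ Real.exp 1 ^ m * (Nat.factorial m : ℝ) := by
  induction m, hm using Nat.le_induction with
  | base =>
    simp only [pow_one, Nat.cast_one, Nat.factorial_one, mul_one]
    have := Real.add_one_le_exp 1
    norm_num at this ⊢
    linarith
  | succ m hm ih =>
    have hm0 : (0 : ℝ) < m := by exact_mod_cast hm
    have hstep : ((m : ℝ) + 1) ^ m ≤ Real.exp 1 * (m : ℝ) ^ m := by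
      have h1 : (1 + 1 / (m : ℝ)) ≤ Real.exp (1 / m) := by
        have := Real.add_one_le_exp (1 / (m : ℝ))
        linarith
      have h2 : (1 + 1 / (m : ℝ)) ^ m ≤ Real.exp (1 / m) ^ m := by
        apply pow_le_pow_left₀ (by positivity) h1
      have h3 : Real.exp (1 / (m : ℝ)) ^ m = Real.exp 1 := by
        rw [← Real.exp_nat_mul]
        congr 1
        field_simp
      have h4 : ((m : ℝ) + 1) ^ m = (1 + 1 / (m : ℝ)) ^ m * (m : ℝ) ^ m := by
        rw [← mul_pow]
        congr 1
        field_simp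
      rw [h4]
      exact mul_le_mul_of_nonneg_right (h2.trans_eq h3) (by positivity)
    have hfact : (Nat.factorial (m+1) : ℝ) = ((m : ℝ) + 1) * (Nat.factorial m : ℝ) := by
      rw [Nat.factorial_succ]; push_cast; ring
    have hexp : Real.exp 1 ^ (m + 1) = Real.exp 1 * Real.exp 1 ^ m := by ring
    have hmain : 2 * ((m : ℝ) + 1) ^ (m + 1) ≤ Real.exp 1 ^ (m+1) * (Nat.factorial (m+1) : ℝ) := by
      rw [hfact, hexp]
      have e1 : 2 * ((m : ℝ) + 1) ^ (m + 1) = ((m : ℝ) + 1) * (2 * ((m : ℝ) + 1) ^ m) := by ring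
      rw [e1]
      have e2 : ((m : ℝ) + 1) * (2 * ((m : ℝ) + 1) ^ m)
          ≤ ((m : ℝ) + 1) * (2 * (Real.exp 1 * (m : ℝ) ^ m)) := by
        apply mul_le_mul_of_nonneg_left (by linarith) (by positivity)
      refine e2.trans ?_
      have e3 : 2 * (m : ℝ) ^ m ≤ Real.exp 1 ^ m * (Nat.factorial m : ℝ) := ih
      have hexppos : (0 : ℝ) < Real.exp 1 := Real.exp_pos 1
      calc ((m : ℝ) + 1) * (2 * (Real.exp 1 * (m : ℝ) ^ m))
          = ((m : ℝ) + 1) * Real.exp 1 * (2 * (m : ℝ) ^ m) := by ring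
        _ ≤ ((m : ℝ) + 1) * Real.exp 1 * (Real.exp 1 ^ m * (Nat.factorial m : ℝ)) :=
            mul_le_mul_of_nonneg_left e3 (by positivity)
        _ = Real.exp 1 * Real.exp 1 ^ m * (((m : ℝ) + 1) * (Nat.factorial m : ℝ)) := by ring
    push_cast
    exact hmain

theorem count_bound (dd m : ℕ) (hm : 1 ≤ m) :
    (((m * dd).choose m : ℕ) : ℝ) ≤ (Real.exp 1 * dd) ^ m / 2 := by
  have h1 : (((m * dd).choose m : ℕ) : ℝ) ≤ ((m * dd : ℕ) : ℝ) ^ m / (Nat.factorial m : ℝ) := by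
    have h := Nat.choose_le_pow_div (α := ℝ) m (m * dd)
    calc (((m * dd).choose m : ℕ) : ℝ) ≤ (((m * dd : ℕ)) ^ m : ℝ) / (Nat.factorial m : ℝ) := h
      _ = ((m * dd : ℕ) : ℝ) ^ m / (Nat.factorial m : ℝ) := by push_cast; ring
  refine h1.trans ?_
  have hfpos : (0 : ℝ) < (Nat.factorial m : ℝ) := by exact_mod_cast m.factorial_pos
  rw [div_le_div_iff₀ hfpos (by norm_num : (0:ℝ) < 2)]
  have hfb := fact_bound m hm
  have hdd : (0:ℝ) ≤ (dd : ℝ) := by positivity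
  calc ((m * dd : ℕ) : ℝ) ^ m * 2 = (dd : ℝ) ^ m * (2 * (m : ℝ) ^ m) := by
        push_cast; rw [mul_pow]; ring
    _ ≤ (dd : ℝ) ^ m * (Real.exp 1 ^ m * (Nat.factorial m : ℝ)) := by
        apply mul_le_mul_of_nonneg_left hfb (by positivity)
    _ = (Real.exp 1 * dd) ^ m * (Nat.factorial m : ℝ) := by
        rw [mul_pow]; ring


end Aux

/-- **Lemma 2 of the paper.** Let `G` be a multihypergraph of maximum degree at most `Δ`
and rank at most `r` (with `Δ, r ≥ 2`), and let `v` be a vertex.  The number of connected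
subgraphs of `G` with exactly `m ≥ 1` edges whose vertex set contains `v` is at most
`(e·Δ·(r−1))^m / 2`. -/
theorem card_connected_subgraphs_le
    [Fintype Eg] (Δ r : ℤ) (hΔ : 2 ≤ Δ) (hr : 2 ≤ r) (m : ℕ) (hm : 1 ≤ m)
    (edge : Eg → Finset V)
    (hne : ∀ e : Eg, (edge e).Nonempty)
    (hdeg : ∀ v : V, (degree edge v : ℤ) ≤ Δ)
    (hrank : ∀ e : Eg, ((edge e).card : ℤ) ≤ r)
    (v : V) :
    (Nat.card {S : Finset Eg //
        ConnectedSub edge S ∧ S.card = m ∧ v ∈ vertexSet edge S} : ℝ) ≤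
      (Real.exp 1 * Δ * (r - 1)) ^ m / 2 := by
  classical
  set D := Δ.toNat with hDdef
  set R := r.toNat with hRdef
  have hD2 : 2 ≤ D := by omega
  have hR2 : 2 ≤ R := by omega
  set d := D * (R - 1) with hddef
  have hd0 : 0 < d := by
    have h1 : 0 < D := by omega
    have h2 : 0 < R - 1 := by omega
    exact Nat.mul_pos h1 h2
  have hdegN : ∀ w : V, (eL edge w).length ≤ D := by
    intro w
    have hlen : (eL edge w).length = degree edge w := by
      rw [eL, Finset.length_toList, degree, Nat.card_eq_fintype_card, Fintype.card_subtype]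
    rw [hlen]
    have := hdeg w
    omega
  have hrankN : ∀ e : Eg, (edge e).card ≤ R := by
    intro e; have := hrank e; omega
  have hconv : ∀ S : Finset Eg, ConnectedSub edge S → ConnectedSub' edge S := fun S h => h
  have hconv2 : ∀ S : Finset Eg, v ∈ vertexSet edge S → v ∈ vertexSet' edge S := fun S h => h
  set pcs := Finset.powersetCard m (Finset.range (m * d)) with hpcs
  have hmem : ∀ S : Finset Eg, ConnectedSub edge S → S.card = m → v ∈ vertexSet edge S →
      encSlots edge D d v S (m-1) ∈ pcs := by
    intro S h1 h2 h3
    rw [hpcs, Finset.mem_powersetCard]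
    constructor
    · refine (encSlots_subset edge D d v S (m-1)).trans ?_
      have hmm : m - 1 + 1 = m := by omega
      rw [hmm]
    · rw [encSlots_card edge D d v S hd0 (m-1),
        (encRun_final edge D d v S R m (by omega) hdegN hrankN hddef hR2 hm
          (hconv S h1) h2 (hconv2 S h3)).2]
  let f : {S : Finset Eg // ConnectedSub edge S ∧ S.card = m ∧ v ∈ vertexSet edge S} →
      {A : Finset ℕ // A ∈ pcs} :=
    fun s => ⟨encSlots edge D d v s.1 (m-1), hmem s.1 s.2.1 s.2.2.1 s.2.2.2⟩
  have hinj : Function.Injective f := by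
    intro s₁ s₂ hf
    have heq : encSlots edge D d v s₁.1 (m-1) = encSlots edge D d v s₂.1 (m-1) :=
      congrArg Subtype.val hf
    have e1 := decRun_encSlots edge D d v s₁.1 hd0 (m-1) (m-1) le_rfl
    have e2 := decRun_encSlots edge D d v s₂.1 hd0 (m-1) (m-1) le_rfl
    rw [heq] at e1
    have hrun : encRun edge D d v s₁.1 (m-1) = encRun edge D d v s₂.1 (m-1) := by
      rw [← e1, ← e2]
    have f1 := (encRun_final edge D d v s₁.1 R m (by omega) hdegN hrankN hddef hR2 hm
      (hconv _ s₁.2.1) s₁.2.2.1 (hconv2 _ s₁.2.2.2)).1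
    have f2 := (encRun_final edge D d v s₂.1 R m (by omega) hdegN hrankN hddef hR2 hm
      (hconv _ s₂.2.1) s₂.2.2.1 (hconv2 _ s₂.2.2.2)).1
    apply Subtype.ext
    rw [← f1, ← f2, hrun]
  have hcard := Nat.card_le_card_of_injective f hinj
  have hcard2 : Nat.card {A : Finset ℕ // A ∈ pcs} = (m * d).choose m := by
    rw [Nat.card_eq_fintype_card, Fintype.card_coe, hpcs, Finset.card_powersetCard,
      Finset.card_range]
  have hreal : (((m * d).choose m : ℕ) : ℝ) ≤ (Real.exp 1 * d) ^ m / 2 := count_bound d m hm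
  have hDr : ((D : ℕ) : ℝ) = (Δ : ℝ) := by
    have h := Int.toNat_of_nonneg (by omega : (0:ℤ) ≤ Δ)
    rw [hDdef]
    exact_mod_cast congrArg (Int.cast : ℤ → ℝ) h
  have hRr : ((R : ℕ) : ℝ) = (r : ℝ) := by
    have h := Int.toNat_of_nonneg (by omega : (0:ℤ) ≤ r)
    rw [hRdef]
    exact_mod_cast congrArg (Int.cast : ℤ → ℝ) h
  have hdc : ((d : ℕ) : ℝ) = (Δ : ℝ) * ((r : ℝ) - 1) := by
    rw [hddef, Nat.cast_mul, Nat.cast_sub (by omega : 1 ≤ R), hDr, hRr]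
    norm_num
  calc (Nat.card {S : Finset Eg //
        ConnectedSub edge S ∧ S.card = m ∧ v ∈ vertexSet edge S} : ℝ)
      ≤ (((m * d).choose m : ℕ) : ℝ) := by
        exact_mod_cast le_trans hcard (le_of_eq hcard2)
    _ ≤ (Real.exp 1 * (d : ℝ)) ^ m / 2 := hreal
    _ = (Real.exp 1 * (Δ : ℝ) * ((r : ℝ) - 1)) ^ m / 2 := by
        rw [hdc, ← mul_assoc]

end Stmt1
end

section
/- Fix Δ, r ∈ ℤ with Δ ≥ 2 and r ≥ 2. Let G = (V, E) be a multihypergraph of maximum degree at most Δ and rank at most r, and let w assign to each polymer γ (connected subgraph of G with at least one edge) a complex weight w_γ with |w_γ| ≤ (1/(e³·Δ·C(r,2)))^{‖γ‖}, where C(r,2) = r(r−1)/2. Then for every vertex v ∈ V, Σ_{γ : v ∈ V(γ)} |w_γ| · exp( (1/2)·( |γ|/(r−1) + ‖γ‖ ) ) ≤ 1/(2(r−1)), where the sum is over all polymers whose vertex set contains v, |γ| is the number of vertices of γ, and ‖γ‖ the number of edges of γ. -/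
open scoped Classical
set_option linter.unusedSectionVars false
set_option linter.unusedVariables false
set_option maxHeartbeats 1000000

namespace Stmt3

variable {V Eg : Type*} [DecidableEq V] [DecidableEq Eg]

/-- The vertex set `V(S) = ⋃_{ε ∈ S} ε` of the subgraph of a multihypergraph
determined by a set `S` of edges. -/
def vertexSet (edge : Eg → Finset V) (S : Finset Eg) : Finset V :=
  S.biUnion edge

/-- A subgraph determined by a set `S` of edges is connected if `S` is nonempty and
any two edges of `S` are joined by a chain of edges of `S` in which consecutive
edges intersect.  Polymers are exactly the connected subgraphs. -/
def ConnectedSub (edge : Eg → Finset V) (S : Finset Eg) : Prop :=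
  S.Nonempty ∧ ∀ a ∈ S, ∀ b ∈ S,
    Relation.ReflTransGen (fun x y => x ∈ S ∧ y ∈ S ∧ (edge x ∩ edge y).Nonempty) a b

/-- The degree of a vertex `v`: the number of edges containing `v`. -/
noncomputable def degree [Fintype Eg] (edge : Eg → Finset V) (v : V) : ℕ :=
  Nat.card {e : Eg // v ∈ edge e}

open Finset

/-! ### Auxiliary machinery: connectivity, components, and the component decomposition -/

section Aux

variable (edge : Eg → Finset V)

def rel (S : Finset Eg) (x y : Eg) : Prop :=
  x ∈ S ∧ y ∈ S ∧ (edge x ∩ edge y).Nonempty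

def Reach (S : Finset Eg) : Eg → Eg → Prop := Relation.ReflTransGen (rel edge S)

lemma rel_symm (S : Finset Eg) : Symmetric (rel edge S) :=
  fun _ _ ⟨hx, hy, hn⟩ => ⟨hy, hx, by rwa [Finset.inter_comm]⟩

lemma reach_symm {S : Finset Eg} {a b : Eg} (h : Reach edge S a b) : Reach edge S b a :=
  by
    haveI : Std.Symm (rel edge S) := ⟨fun _ _ hh => rel_symm edge S hh⟩
    exact (Relation.ReflTransGen.stdSymm (r := rel edge S)).symm a b h

noncomputable def comp (S : Finset Eg) (g : Eg) : Finset Eg :=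
  S.filter fun h => Reach edge S g h

lemma mem_comp {S : Finset Eg} {g h : Eg} :
    h ∈ comp edge S g ↔ h ∈ S ∧ Reach edge S g h := by
  simp [comp]

lemma comp_subset {S : Finset Eg} {g : Eg} : comp edge S g ⊆ S := filter_subset _ _

lemma comp_eq_of_reach {S : Finset Eg} {g h : Eg} (hr : Reach edge S g h) :
    comp edge S g = comp edge S h := by
  ext a
  simp only [mem_comp]
  exact ⟨fun ⟨ha, hra⟩ => ⟨ha, (reach_symm edge hr).trans hra⟩,
    fun ⟨ha, hra⟩ => ⟨ha, hr.trans hra⟩⟩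

lemma reach_comp {S : Finset Eg} {g a : Eg} (hg : g ∈ S) (h : Reach edge S g a) :
    Reach edge (comp edge S g) g a := by
  induction h with
  | refl => exact Relation.ReflTransGen.refl
  | @tail b c hb step ih =>
      exact ih.tail ⟨(mem_comp edge).mpr ⟨step.1, hb⟩,
        (mem_comp edge).mpr ⟨step.2.1, hb.tail step⟩, step.2.2⟩

lemma comp_connected {S : Finset Eg} {g : Eg} (hg : g ∈ S) :
    ConnectedSub edge (comp edge S g) := by
  refine ⟨⟨g, (mem_comp edge).mpr ⟨hg, Relation.ReflTransGen.refl⟩⟩, ?_⟩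
  intro a ha b hb
  rw [mem_comp] at ha hb
  have h1 : Reach edge (comp edge S g) g a := reach_comp edge hg ha.2
  have h2 : Reach edge (comp edge S g) g b := reach_comp edge hg hb.2
  exact (reach_symm edge h1).trans h2

noncomputable def Nbr [Fintype Eg] (f : Eg) : Finset Eg :=
  univ.filter fun g => g ≠ f ∧ (edge f ∩ edge g).Nonempty

lemma exists_nbr [Fintype Eg] {S : Finset Eg} {f h : Eg} (hS : ConnectedSub edge S)
    (hf : f ∈ S) (hh : h ∈ S.erase f) :
    ∃ g, g ∈ comp edge (S.erase f) h ∧ g ∈ Nbr edge f := by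
  have key : ∀ c, Reach edge S f c → c = f ∨
      ∃ g ∈ S.erase f, (edge f ∩ edge g).Nonempty ∧ Reach edge (S.erase f) g c := by
    intro c hc
    induction hc with
    | refl => exact Or.inl rfl
    | @tail b c hb step ih =>
      by_cases hcf : c = f
      · exact Or.inl hcf
      · right
        have hc' : c ∈ S.erase f := mem_erase.mpr ⟨hcf, step.2.1⟩
        by_cases hbf : b = f
        · subst hbf
          exact ⟨c, hc', step.2.2, Relation.ReflTransGen.refl⟩
        · rcases ih with h' | ⟨g, hg, hint, hreach⟩
          · exact absurd h' hbf
          · have hb' : b ∈ S.erase f := mem_erase.mpr ⟨hbf, step.1⟩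
            exact ⟨g, hg, hint, hreach.tail ⟨hb', hc', step.2.2⟩⟩
  have hreachfh : Reach edge S f h := hS.2 f hf h (mem_of_mem_erase hh)
  rcases key h hreachfh with h' | ⟨g, hg, hint, hreach⟩
  · exact absurd h' (mem_erase.mp hh).1
  · exact ⟨g, (mem_comp edge).mpr ⟨hg, reach_symm edge hreach⟩,
      mem_filter.mpr ⟨mem_univ g, (mem_erase.mp hg).1, hint⟩⟩

noncomputable def rep [Fintype Eg] [LinearOrder Eg] (f : Eg) (C : Finset Eg) : Eg :=
  if h : (C ∩ Nbr edge f).Nonempty then (C ∩ Nbr edge f).min' h else f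

noncomputable def part [Fintype Eg] [LinearOrder Eg] (f : Eg) (S : Finset Eg) (g : Eg) :
    Finset Eg :=
  if g ∈ S.erase f ∧ g = rep edge f (comp edge (S.erase f) g) then
    comp edge (S.erase f) g else ∅

variable [Fintype Eg] [LinearOrder Eg]

lemma part_subset {f : Eg} {S : Finset Eg} {g : Eg} : part edge f S g ⊆ S.erase f := by
  unfold part; split
  · exact comp_subset edge
  · exact empty_subset _

lemma part_cases (f : Eg) (S : Finset Eg) (g : Eg) :
    part edge f S g = ∅ ∨
      (part edge f S g = comp edge (S.erase f) g ∧ g ∈ S.erase f ∧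
        g = rep edge f (comp edge (S.erase f) g) ∧ g ∈ Nbr edge f) := by
  unfold part
  split_ifs with hc
  · right
    refine ⟨rfl, hc.1, hc.2, ?_⟩
    by_cases hne : (comp edge (S.erase f) g ∩ Nbr edge f).Nonempty
    · have hm := Finset.min'_mem _ hne
      have heq := hc.2
      rw [rep, dif_pos hne] at heq
      rw [heq]
      exact (mem_inter.mp hm).2
    · exfalso
      have := hc.2
      rw [rep, dif_neg hne] at this
      exact (mem_erase.mp hc.1).1 this
  · left; rfl

lemma part_disjoint {f : Eg} {S : Finset Eg} {g₁ g₂ : Eg} (hne : g₁ ≠ g₂) :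
    Disjoint (part edge f S g₁) (part edge f S g₂) := by
  rw [Finset.disjoint_left]
  intro h h1 h2
  rcases part_cases edge f S g₁ with e1 | ⟨e1, _, hr1, _⟩
  · rw [e1] at h1; exact absurd h1 (notMem_empty _)
  rcases part_cases edge f S g₂ with e2 | ⟨e2, _, hr2, _⟩
  · rw [e2] at h2; exact absurd h2 (notMem_empty _)
  rw [e1, mem_comp] at h1
  rw [e2, mem_comp] at h2
  have hcc : comp edge (S.erase f) g₁ = comp edge (S.erase f) g₂ := by
    rw [comp_eq_of_reach edge h1.2, ← comp_eq_of_reach edge h2.2]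
  exact hne (by rw [hr1, hr2, hcc])

lemma biUnion_part {f : Eg} {S : Finset Eg} (hS : ConnectedSub edge S) (hf : f ∈ S) :
    univ.biUnion (part edge f S) = S.erase f := by
  apply Finset.Subset.antisymm
  · intro h hh
    rcases mem_biUnion.mp hh with ⟨g, _, hg⟩
    exact part_subset edge hg
  · intro h hh
    obtain ⟨g₀, hg₀c, hg₀n⟩ := exists_nbr edge hS hf hh
    have hCne : (comp edge (S.erase f) h ∩ Nbr edge f).Nonempty :=
      ⟨g₀, mem_inter.mpr ⟨hg₀c, hg₀n⟩⟩
    set g := (comp edge (S.erase f) h ∩ Nbr edge f).min' hCne with hgdef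
    have hgmem : g ∈ comp edge (S.erase f) h ∩ Nbr edge f := Finset.min'_mem _ _
    have hgc := (mem_inter.mp hgmem).1
    rw [mem_comp] at hgc
    have hcomp : comp edge (S.erase f) g = comp edge (S.erase f) h :=
      (comp_eq_of_reach edge hgc.2).symm
    have hcond : g ∈ S.erase f ∧ g = rep edge f (comp edge (S.erase f) g) := by
      refine ⟨hgc.1, ?_⟩
      rw [hcomp, rep, dif_pos hCne]
    apply mem_biUnion.mpr ⟨g, mem_univ g, ?_⟩
    unfold part
    rw [if_pos hcond, hcomp, mem_comp]
    exact ⟨hh, Relation.ReflTransGen.refl⟩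

lemma insert_biUnion_part {f : Eg} {S : Finset Eg} (hS : ConnectedSub edge S) (hf : f ∈ S) :
    insert f (univ.biUnion (part edge f S)) = S := by
  rw [biUnion_part edge hS hf, insert_erase hf]

lemma sum_card_part {f : Eg} {S : Finset Eg} (hS : ConnectedSub edge S) (hf : f ∈ S) :
    ∑ g, (part edge f S g).card = S.card - 1 := by
  rw [← card_biUnion, biUnion_part edge hS hf, card_erase_of_mem hf]
  intro x _ y _ hxy; exact part_disjoint edge hxy

/-! ### The key inductive bound -/

noncomputable def polyAt (k : ℕ) (f : Eg) : Finset (Finset Eg) :=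
  univ.filter fun S => ConnectedSub edge S ∧ f ∈ S ∧ S.card ≤ k

lemma mem_part_self {f : Eg} {S : Finset Eg} {g : Eg}
    (h : part edge f S g = comp edge (S.erase f) g) (hg : g ∈ S.erase f) :
    g ∈ part edge f S g := by
  rw [h, mem_comp]; exact ⟨hg, Relation.ReflTransGen.refl⟩

lemma recursion (μ aa : ℝ) (hμ : 0 ≤ μ) (ha : 0 ≤ aa)
    (hcond : ∀ f : Eg, μ * (1 + aa) ^ (Nbr edge f).card ≤ aa) :
    ∀ (k : ℕ) (f : Eg), ∑ S ∈ polyAt edge k f, μ ^ S.card ≤ aa := by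
  intro k
  induction k with
  | zero =>
    intro f
    have hempty : polyAt edge 0 f = ∅ := by
      apply eq_empty_of_forall_notMem
      intro S hS
      rw [polyAt, mem_filter] at hS
      have := card_pos.mpr ⟨f, hS.2.2.1⟩
      omega
    rw [hempty, sum_empty]; exact ha
  | succ k ih =>
    intro f
    set B : Eg → Finset (Finset Eg) :=
      fun g => if g ∈ Nbr edge f then insert ∅ (polyAt edge k g) else {∅} with hB
    have hstep1 : ∀ S ∈ polyAt edge (k+1) f,
        μ ^ S.card = μ * ∏ g, μ ^ (part edge f S g).card := by
      intro S hS
      rw [polyAt, mem_filter] at hS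
      obtain ⟨-, hconn, hfS, hcard⟩ := hS
      have h1 : 1 ≤ S.card := card_pos.mpr ⟨f, hfS⟩
      rw [prod_pow_eq_pow_sum, sum_card_part edge hconn hfS, ← pow_succ']
      congr 1
      omega
    have hmem : ∀ S ∈ polyAt edge (k+1) f,
        (fun g => part edge f S g) ∈ Fintype.piFinset B := by
      intro S hS
      rw [polyAt, mem_filter] at hS
      obtain ⟨-, hconn, hfS, hcard⟩ := hS
      rw [Fintype.mem_piFinset]
      intro g
      rw [hB]
      simp only
      rcases part_cases edge f S g with hpe | ⟨hpc, hgS', -, hgN⟩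
      · split_ifs
        · rw [hpe]; exact mem_insert_self _ _
        · rw [hpe]; exact mem_singleton_self _
      · rw [if_pos hgN]
        apply mem_insert_of_mem
        rw [polyAt, mem_filter]
        refine ⟨mem_univ _, ?_, ?_, ?_⟩
        · rw [hpc]; exact comp_connected edge hgS'
        · exact mem_part_self edge hpc hgS'
        · have h1 := card_le_card (part_subset (edge := edge) (f := f) (S := S) (g := g))
          rw [card_erase_of_mem hfS] at h1
          omega
    have hinj : ∀ S1 ∈ polyAt edge (k+1) f, ∀ S2 ∈ polyAt edge (k+1) f,
        (fun g => part edge f S1 g) = (fun g => part edge f S2 g) → S1 = S2 := by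
      intro S1 h1 S2 h2 hEq
      rw [polyAt, mem_filter] at h1 h2
      have e1 := insert_biUnion_part edge h1.2.1 h1.2.2.1
      have e2 := insert_biUnion_part edge h2.2.1 h2.2.2.1
      rw [← e1, ← e2]
      congr 1
      apply biUnion_congr rfl
      intro g _
      exact congrFun hEq g
    have key : ∑ S ∈ polyAt edge (k+1) f, ∏ g, μ ^ (part edge f S g).card
        ≤ ∑ x ∈ Fintype.piFinset B, ∏ g, μ ^ ((x g)).card := by
      have himg := Finset.sum_image (f := fun x : Eg → Finset Eg => ∏ g, μ ^ ((x g)).card)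
        (s := polyAt edge (k+1) f) (g := fun S => fun g => part edge f S g) hinj
      rw [← himg]
      apply Finset.sum_le_sum_of_subset_of_nonneg
      · intro x hx
        rcases mem_image.mp hx with ⟨S, hS, hxS⟩
        rw [← hxS]
        exact hmem S hS
      · intro x _ _
        exact prod_nonneg fun g _ => pow_nonneg hμ _
    have hswap : ∑ x ∈ Fintype.piFinset B, ∏ g, μ ^ ((x g)).card
        = ∏ g, ∑ T ∈ B g, μ ^ T.card :=
      (Finset.prod_univ_sum B fun g T => μ ^ T.card).symm
    have hprod : ∏ g, ∑ T ∈ B g, μ ^ T.card ≤ (1 + aa) ^ (Nbr edge f).card := by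
      have hfac1 : ∀ g ∉ Nbr edge f, (∑ T ∈ B g, μ ^ T.card) = 1 := by
        intro g hg
        rw [hB]; simp only [if_neg hg]
        rw [sum_singleton, card_empty, pow_zero]
      have hfac2 : ∀ g ∈ Nbr edge f, (∑ T ∈ B g, μ ^ T.card) ≤ 1 + aa := by
        intro g hg
        rw [hB]; simp only [if_pos hg]
        have hnm : (∅ : Finset Eg) ∉ polyAt edge k g := by
          intro hmm
          rw [polyAt, mem_filter] at hmm
          exact notMem_empty g hmm.2.2.1
        rw [sum_insert hnm, card_empty, pow_zero]
        linarith [ih g]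
      have heq : ∏ g, ∑ T ∈ B g, μ ^ T.card
          = ∏ g ∈ Nbr edge f, ∑ T ∈ B g, μ ^ T.card :=
        (Finset.prod_subset (subset_univ _) fun g _ hg => hfac1 g hg).symm
      rw [heq]
      calc ∏ g ∈ Nbr edge f, ∑ T ∈ B g, μ ^ T.card
          ≤ ∏ g ∈ Nbr edge f, (1 + aa) := by
            apply Finset.prod_le_prod
            · intro g _
              exact sum_nonneg fun T _ => pow_nonneg hμ _
            · intro g hg
              exact hfac2 g hg
        _ = (1 + aa) ^ (Nbr edge f).card := by rw [prod_const]
    calc ∑ S ∈ polyAt edge (k+1) f, μ ^ S.card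
        = ∑ S ∈ polyAt edge (k+1) f, μ * ∏ g, μ ^ (part edge f S g).card :=
          sum_congr rfl hstep1
      _ = μ * ∑ S ∈ polyAt edge (k+1) f, ∏ g, μ ^ (part edge f S g).card := by
          rw [mul_sum]
      _ ≤ μ * ∑ x ∈ Fintype.piFinset B, ∏ g, μ ^ ((x g)).card :=
          mul_le_mul_of_nonneg_left key hμ
      _ = μ * ∏ g, ∑ T ∈ B g, μ ^ T.card := by rw [hswap]
      _ ≤ μ * (1 + aa) ^ (Nbr edge f).card := mul_le_mul_of_nonneg_left hprod hμ
      _ ≤ aa := hcond f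

/-! ### Counting lemmas -/

lemma nbr_card (Δn rn : ℕ)
    (hdeg : ∀ u : V, (univ.filter fun e : Eg => u ∈ edge e).card ≤ Δn)
    (hrank : ∀ e : Eg, (edge e).card ≤ rn) (f : Eg) :
    (Nbr edge f).card ≤ rn * (Δn - 1) := by
  have hsub : Nbr edge f ⊆
      (edge f).biUnion fun u => (univ.filter fun g : Eg => u ∈ edge g).erase f := by
    intro g hg
    rw [Nbr, mem_filter] at hg
    obtain ⟨u, hu⟩ := hg.2.2
    rw [mem_inter] at hu
    exact mem_biUnion.mpr ⟨u, hu.1,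
      mem_erase.mpr ⟨hg.2.1, mem_filter.mpr ⟨mem_univ _, hu.2⟩⟩⟩
  calc (Nbr edge f).card
      ≤ ((edge f).biUnion fun u => (univ.filter fun g : Eg => u ∈ edge g).erase f).card :=
        card_le_card hsub
    _ ≤ ∑ u ∈ edge f, ((univ.filter fun g : Eg => u ∈ edge g).erase f).card :=
        card_biUnion_le
    _ ≤ ∑ u ∈ edge f, (Δn - 1) := by
        apply sum_le_sum
        intro u hu
        rw [card_erase_of_mem (mem_filter.mpr ⟨mem_univ f, hu⟩)]
        exact Nat.sub_le_sub_right (hdeg u) 1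
    _ = (edge f).card * (Δn - 1) := by rw [sum_const, smul_eq_mul]
    _ ≤ rn * (Δn - 1) := Nat.mul_le_mul_right _ (hrank f)

lemma vertex_card (rn : ℕ) (hrn : 1 ≤ rn) (hrank : ∀ e : Eg, (edge e).card ≤ rn) :
    ∀ (n : ℕ) (S : Finset Eg), S.card ≤ n → ConnectedSub edge S →
      (vertexSet edge S).card ≤ (rn - 1) * S.card + 1 := by
  intro n
  induction n with
  | zero =>
    intro S hc hS
    obtain ⟨x, hx⟩ := hS.1
    have := card_pos.mpr ⟨x, hx⟩
    omega
  | succ n ih =>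
    intro S hc hS
    obtain ⟨f, hf⟩ := hS.1
    have hsub : vertexSet edge S ⊆
        edge f ∪ univ.biUnion fun g => vertexSet edge (part edge f S g) \ edge f := by
      intro u hu
      rw [vertexSet, mem_biUnion] at hu
      obtain ⟨e, heS, hue⟩ := hu
      by_cases hef : u ∈ edge f
      · exact mem_union_left _ hef
      · apply mem_union_right
        rw [mem_biUnion]
        have heS' : e ∈ S.erase f := mem_erase.mpr ⟨fun h => hef (h ▸ hue), heS⟩
        rw [← biUnion_part edge hS hf, mem_biUnion] at heS'
        obtain ⟨g, -, hge⟩ := heS'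
        exact ⟨g, mem_univ g, mem_sdiff.mpr ⟨mem_biUnion.mpr ⟨e, hge, hue⟩, hef⟩⟩
    have hcard1 : (vertexSet edge S).card
        ≤ rn + ∑ g, (vertexSet edge (part edge f S g) \ edge f).card := by
      calc (vertexSet edge S).card
          ≤ (edge f ∪ univ.biUnion fun g => vertexSet edge (part edge f S g) \ edge f).card :=
            card_le_card hsub
        _ ≤ (edge f).card +
              (univ.biUnion fun g => vertexSet edge (part edge f S g) \ edge f).card :=
            card_union_le _ _
        _ ≤ rn + ∑ g, (vertexSet edge (part edge f S g) \ edge f).card :=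
            add_le_add (hrank f) card_biUnion_le
    have hpart : ∀ g : Eg,
        (vertexSet edge (part edge f S g) \ edge f).card ≤ (rn - 1) * (part edge f S g).card := by
      intro g
      rcases part_cases edge f S g with hpe | ⟨hpc, hgS', -, hgN⟩
      · rw [hpe]
        simp [vertexSet]
      · have hconn : ConnectedSub edge (part edge f S g) := by
          rw [hpc]; exact comp_connected edge hgS'
        have hcardp : (part edge f S g).card ≤ n := by
          have h1 := card_le_card (part_subset (edge := edge) (f := f) (S := S) (g := g))
          rw [card_erase_of_mem hf] at h1
          have h2 : 1 ≤ S.card := card_pos.mpr ⟨f, hf⟩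
          omega
        have hIH := ih (part edge f S g) hcardp hconn
        obtain ⟨u, hu⟩ := (mem_filter.mp hgN).2.2
        rw [mem_inter] at hu
        have hginp : g ∈ part edge f S g := mem_part_self edge hpc hgS'
        have huV : u ∈ vertexSet edge (part edge f S g) := mem_biUnion.mpr ⟨g, hginp, hu.2⟩
        have hint : 1 ≤ (vertexSet edge (part edge f S g) ∩ edge f).card :=
          card_pos.mpr ⟨u, mem_inter.mpr ⟨huV, hu.1⟩⟩
        have hsd := card_sdiff_add_card_inter (vertexSet edge (part edge f S g)) (edge f)
        generalize hm : (rn - 1) * (part edge f S g).card = m at hIH ⊢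
        omega
    have hsum : ∑ g, (vertexSet edge (part edge f S g) \ edge f).card
        ≤ (rn - 1) * (S.card - 1) := by
      calc ∑ g, (vertexSet edge (part edge f S g) \ edge f).card
          ≤ ∑ g, (rn - 1) * (part edge f S g).card := sum_le_sum fun g _ => hpart g
        _ = (rn - 1) * ∑ g, (part edge f S g).card := by rw [mul_sum]
        _ = (rn - 1) * (S.card - 1) := by rw [sum_card_part edge hS hf]
    have h1 : 1 ≤ S.card := card_pos.mpr ⟨f, hf⟩
    obtain ⟨q, hq⟩ : ∃ q, rn = q + 1 := ⟨rn - 1, by omega⟩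
    obtain ⟨m, hm⟩ : ∃ m, S.card = m + 1 := ⟨S.card - 1, by omega⟩
    have heq : rn + (rn - 1) * (S.card - 1) = (rn - 1) * S.card + 1 := by
      rw [hq, hm]
      simp only [Nat.add_sub_cancel]
      ring
    calc (vertexSet edge S).card
        ≤ rn + ∑ g, (vertexSet edge (part edge f S g) \ edge f).card := hcard1
      _ ≤ rn + (rn - 1) * (S.card - 1) := Nat.add_le_add_left hsum rn
      _ = (rn - 1) * S.card + 1 := heq

end Aux

/-! ### Numeric estimates -/

lemma sum_biUnion_le' {α β : Type*} [DecidableEq β] (s : Finset α) (t : α → Finset β)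
    (f : β → ℝ) (hf : ∀ b, 0 ≤ f b) :
    ∑ b ∈ s.biUnion t, f b ≤ ∑ a ∈ s, ∑ b ∈ t a, f b := by
  induction s using Finset.induction with
  | empty => simp
  | @insert a s hnotmem ih =>
    rw [biUnion_insert, sum_insert hnotmem]
    have h1 := Finset.sum_union_inter (s₁ := t a) (s₂ := s.biUnion t) (f := f)
    have h2 : 0 ≤ ∑ b ∈ t a ∩ s.biUnion t, f b := sum_nonneg fun b _ => hf b
    linarith

lemma exp_half_lb : (8/5 : ℝ) ≤ Real.exp (1/2) := by
  have hsq : Real.exp (1/2) * Real.exp (1/2) = Real.exp 1 := by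
    rw [← Real.exp_add]; norm_num
  have he1 : (2.7182818283 : ℝ) < Real.exp 1 := Real.exp_one_gt_d9
  nlinarith [Real.exp_pos (1/2 : ℝ)]

lemma exp_neg_half_ub : Real.exp (-(1/2)) ≤ 5/8 := by
  have h := exp_half_lb
  have hp : (0:ℝ) < Real.exp (1/2) := Real.exp_pos _
  rw [Real.exp_neg]
  rw [inv_le_comm₀ hp (by norm_num)]
  linarith

lemma two_le_exp78 : (2:ℝ) ≤ Real.exp (7/8) := by
  have h1 : (23/16 : ℝ) ≤ Real.exp (7/16) := by
    have := Real.add_one_le_exp (7/16 : ℝ)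
    linarith
  have hsq : Real.exp (7/16) * Real.exp (7/16) = Real.exp (7/8) := by
    rw [← Real.exp_add]; norm_num
  nlinarith [Real.exp_pos (7/16 : ℝ)]

lemma numeric_cond (x y : ℝ) (hx : 2 ≤ x) (hy : 2 ≤ y) (n : ℕ)
    (hn : (n : ℝ) ≤ y * (x - 1)) :
    Real.exp 1 * (1 / (Real.exp 1 ^ 3 * x * (y * (y - 1) / 2))) *
      (1 + Real.exp (-(1/2)) / (2 * x * (y - 1))) ^ n
      ≤ Real.exp (-(1/2)) / (2 * x * (y - 1)) := by
  have hx0 : (0:ℝ) < x := by linarith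
  have hy1 : (0:ℝ) < y - 1 := by linarith
  have hE : (0:ℝ) < Real.exp 1 := Real.exp_pos _
  set a : ℝ := Real.exp (-(1/2)) / (2 * x * (y - 1)) with hadef
  have ha0 : 0 < a := div_pos (Real.exp_pos _) (by positivity)
  have h1 : (1 + a) ^ n ≤ Real.exp (a * n) := by
    calc (1 + a) ^ n ≤ (Real.exp a) ^ n := by
          apply pow_le_pow_left₀ (by linarith)
          have := Real.add_one_le_exp a
          linarith
      _ = Real.exp (a * n) := by rw [← Real.exp_nat_mul, mul_comm]
  have h2 : a * n ≤ 5/8 := by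
    have hub : a * (y * (x-1)) ≤ Real.exp (-(1/2)) := by
      rw [hadef, div_mul_eq_mul_div, div_le_iff₀ (by positivity)]
      have hkey : y * (x - 1) ≤ 2 * x * (y - 1) := by nlinarith
      nlinarith [Real.exp_pos (-(1/2):ℝ)]
    have := mul_le_mul_of_nonneg_left hn (le_of_lt ha0)
    have := exp_neg_half_ub
    linarith
  have h3 : (1 + a) ^ n ≤ Real.exp (5/8) := h1.trans (Real.exp_le_exp.mpr h2)
  have hμpos : (0:ℝ) < Real.exp 1 * (1 / (Real.exp 1 ^ 3 * x * (y * (y - 1) / 2))) := by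
    positivity
  have h3e : Real.exp 1 ^ 3 = Real.exp 3 := by
    rw [← Real.exp_nat_mul]; norm_num
  have hid : Real.exp (-(1/2)) * Real.exp 3 = Real.exp (13/8) * Real.exp (7/8) := by
    rw [← Real.exp_add, ← Real.exp_add]; norm_num
  have hid2 : Real.exp 1 * Real.exp (5/8) = Real.exp (13/8) := by
    rw [← Real.exp_add]; norm_num
  have hstep : 2 * Real.exp (13/8) ≤ Real.exp (-(1/2)) * Real.exp 3 := by
    rw [hid]
    nlinarith [Real.exp_pos (13/8 : ℝ), two_le_exp78]
  have hfinal : Real.exp 1 * (1 / (Real.exp 1 ^ 3 * x * (y * (y - 1) / 2))) *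
      Real.exp (5/8) ≤ a := by
    rw [hadef]
    have hD : (0:ℝ) < Real.exp 1 ^ 3 * x * (y * (y - 1) / 2) := by positivity
    have hlhs : Real.exp 1 * (1 / (Real.exp 1 ^ 3 * x * (y * (y - 1) / 2))) *
        Real.exp (5/8) = Real.exp (13/8) / (Real.exp 1 ^ 3 * x * (y * (y - 1) / 2)) := by
      rw [← hid2]; ring
    rw [hlhs, div_le_div_iff₀ hD (by positivity : (0:ℝ) < 2 * x * (y - 1))]
    have hxx : (0:ℝ) ≤ x * (y * (y - 1) / 2) := by positivity
    have hmul := mul_le_mul_of_nonneg_right hstep hxx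
    rw [h3e]
    nlinarith [hmul, mul_nonneg (mul_nonneg (Real.exp_pos (13/8 : ℝ)).le hx0.le) hy1.le, hy]
  calc Real.exp 1 * (1 / (Real.exp 1 ^ 3 * x * (y * (y - 1) / 2))) * (1 + a) ^ n
      ≤ Real.exp 1 * (1 / (Real.exp 1 ^ 3 * x * (y * (y - 1) / 2))) * Real.exp (5/8) :=
        mul_le_mul_of_nonneg_left h3 (le_of_lt hμpos)
    _ ≤ a := hfinal

/-! ### Main theorem -/

/-- The Kotecký–Preiss condition verified in Lemma 3 of the paper: if every polymer
weight satisfies `|w_γ| ≤ (1/(e³·Δ·C(r,2)))^{‖γ‖}`, then for every vertex `v`,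
`Σ_{γ : v ∈ V(γ)} |w_γ|·exp((1/2)(|γ|/(r−1) + ‖γ‖)) ≤ 1/(2(r−1))`. -/
theorem kotecky_preiss_condition
    [Fintype Eg] (Δ r : ℤ) (hΔ : 2 ≤ Δ) (hr : 2 ≤ r)
    (edge : Eg → Finset V)
    (hne : ∀ e : Eg, (edge e).Nonempty)
    (hdeg : ∀ v : V, (degree edge v : ℤ) ≤ Δ)
    (hrank : ∀ e : Eg, ((edge e).card : ℤ) ≤ r)
    (w : Finset Eg → ℂ)
    (hw : ∀ γ : Finset Eg, ConnectedSub edge γ →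
      ‖w γ‖ ≤
        (1 / (Real.exp 1 ^ 3 * Δ * ((r : ℝ) * (r - 1) / 2))) ^ γ.card)
    (v : V) :
    ∑ γ ∈ Finset.univ.filter
        (fun γ : Finset Eg => ConnectedSub edge γ ∧ v ∈ vertexSet edge γ),
      ‖w γ‖ *
        Real.exp ((1 / 2) *
          (((vertexSet edge γ).card : ℝ) / (r - 1) + (γ.card : ℝ))) ≤
      1 / (2 * ((r : ℝ) - 1)) := by
  classical
  letI : LinearOrder Eg := LinearOrder.lift' (Fintype.equivFin Eg) (Fintype.equivFin Eg).injective
  -- basic positivity and casts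
  have hrR : (2:ℝ) ≤ (r:ℝ) := by exact_mod_cast hr
  have hΔR : (2:ℝ) ≤ (Δ:ℝ) := by exact_mod_cast hΔ
  have hy1 : (0:ℝ) < (r:ℝ) - 1 := by linarith
  have hx0 : (0:ℝ) < (Δ:ℝ) := by linarith
  set lam : ℝ := 1 / (Real.exp 1 ^ 3 * (Δ:ℝ) * ((r : ℝ) * ((r:ℝ) - 1) / 2)) with hlam
  set μ : ℝ := Real.exp 1 * lam with hμdef
  set aa : ℝ := Real.exp (-(1/2)) / (2 * (Δ:ℝ) * ((r:ℝ) - 1)) with haadef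
  set P : ℝ := Real.exp (1 / (2 * ((r:ℝ) - 1))) with hPdef
  have hlam0 : 0 < lam := by rw [hlam]; positivity
  have hμ0 : 0 < μ := by rw [hμdef]; positivity
  have haa0 : 0 < aa := by rw [haadef]; positivity
  have hP0 : 0 < P := Real.exp_pos _
  -- natural number versions of Δ and r
  set rn : ℕ := r.toNat with hrn
  set Δn : ℕ := Δ.toNat with hΔn
  have hrncast : ((rn : ℤ)) = r := Int.toNat_of_nonneg (by omega)
  have hΔncast : ((Δn : ℤ)) = Δ := Int.toNat_of_nonneg (by omega)
  have hrnR : ((rn : ℝ)) = (r:ℝ) := by exact_mod_cast congrArg (Int.cast : ℤ → ℝ) hrncast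
  have hΔnR : ((Δn : ℝ)) = (Δ:ℝ) := by exact_mod_cast congrArg (Int.cast : ℤ → ℝ) hΔncast
  have hrn2 : 2 ≤ rn := by omega
  have hΔn2 : 2 ≤ Δn := by omega
  have hranknat : ∀ e : Eg, (edge e).card ≤ rn := by
    intro e
    have := hrank e
    omega
  have hdegnat : ∀ u : V, (univ.filter fun e : Eg => u ∈ edge e).card ≤ Δn := by
    intro u
    have h1 := hdeg u
    have h2 : degree edge u = (univ.filter fun e : Eg => u ∈ edge e).card := by
      rw [degree, Nat.card_eq_fintype_card, Fintype.card_subtype]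
    rw [h2] at h1
    omega
  -- the Kotecký–Preiss condition for the recursion
  have hcond : ∀ f : Eg, μ * (1 + aa) ^ (Nbr edge f).card ≤ aa := by
    intro f
    have hnb : (Nbr edge f).card ≤ rn * (Δn - 1) := nbr_card edge Δn rn hdegnat hranknat f
    have hnbR : ((Nbr edge f).card : ℝ) ≤ (r:ℝ) * ((Δ:ℝ) - 1) := by
      calc ((Nbr edge f).card : ℝ) ≤ ((rn * (Δn - 1) : ℕ) : ℝ) := by exact_mod_cast hnb
        _ = (r:ℝ) * ((Δ:ℝ) - 1) := by
            push_cast [Nat.cast_sub (by omega : 1 ≤ Δn)]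
            rw [hrnR, hΔnR]
    have := numeric_cond (Δ:ℝ) (r:ℝ) hΔR hrR (Nbr edge f).card hnbR
    rw [hμdef, hlam, haadef]
    convert this using 3
  -- the per-polymer estimate
  have hterm : ∀ γ : Finset Eg, ConnectedSub edge γ →
      ‖w γ‖ *
        Real.exp ((1 / 2) * (((vertexSet edge γ).card : ℝ) / ((r:ℝ) - 1) + (γ.card : ℝ)))
      ≤ P * μ ^ γ.card := by
    intro γ hγ
    have hk1 : 1 ≤ γ.card := card_pos.mpr hγ.1
    have hvc : (vertexSet edge γ).card ≤ (rn - 1) * γ.card + 1 :=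
      vertex_card edge rn (by omega) hranknat γ.card γ (le_refl _) hγ
    have hvcR : ((vertexSet edge γ).card : ℝ) ≤ ((r:ℝ) - 1) * (γ.card : ℝ) + 1 := by
      calc ((vertexSet edge γ).card : ℝ) ≤ (((rn - 1) * γ.card + 1 : ℕ) : ℝ) := by
            exact_mod_cast hvc
        _ = ((r:ℝ) - 1) * (γ.card : ℝ) + 1 := by
            push_cast [Nat.cast_sub (by omega : 1 ≤ rn)]
            rw [hrnR]
    have hexp : Real.exp ((1 / 2) * (((vertexSet edge γ).card : ℝ) / ((r:ℝ) - 1) + (γ.card : ℝ)))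
        ≤ P * Real.exp 1 ^ γ.card := by
      have harg : (1 / 2) * (((vertexSet edge γ).card : ℝ) / ((r:ℝ) - 1) + (γ.card : ℝ))
          ≤ 1 / (2 * ((r:ℝ) - 1)) + (γ.card : ℝ) := by
        have hdiv : ((vertexSet edge γ).card : ℝ) / ((r:ℝ) - 1)
            ≤ (γ.card : ℝ) + 1 / ((r:ℝ) - 1) := by
          rw [div_le_iff₀ hy1]
          have : ((γ.card : ℝ) + 1 / ((r:ℝ) - 1)) * ((r:ℝ) - 1)
              = ((r:ℝ) - 1) * (γ.card : ℝ) + 1 := by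
            field_simp
          rw [this]
          exact hvcR
        have h2 : (0:ℝ) < 2 * ((r:ℝ) - 1) := by linarith
        calc (1 / 2) * (((vertexSet edge γ).card : ℝ) / ((r:ℝ) - 1) + (γ.card : ℝ))
            ≤ (1 / 2) * (((γ.card : ℝ) + 1 / ((r:ℝ) - 1)) + (γ.card : ℝ)) := by
              apply mul_le_mul_of_nonneg_left _ (by norm_num)
              linarith
          _ = 1 / (2 * ((r:ℝ) - 1)) + (γ.card : ℝ) := by
              field_simp
              ring
      calc Real.exp ((1 / 2) * (((vertexSet edge γ).card : ℝ) / ((r:ℝ) - 1) + (γ.card : ℝ)))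
          ≤ Real.exp (1 / (2 * ((r:ℝ) - 1)) + (γ.card : ℝ)) := Real.exp_le_exp.mpr harg
        _ = P * Real.exp 1 ^ γ.card := by
            rw [Real.exp_add, hPdef]
            congr 1
            rw [← Real.exp_nat_mul, mul_one]
    calc ‖w γ‖ *
          Real.exp ((1 / 2) * (((vertexSet edge γ).card : ℝ) / ((r:ℝ) - 1) + (γ.card : ℝ)))
        ≤ lam ^ γ.card * (P * Real.exp 1 ^ γ.card) := by
          apply mul_le_mul (hw γ hγ) hexp (Real.exp_nonneg _)
          exact pow_nonneg hlam0.le _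
      _ = P * μ ^ γ.card := by
          rw [hμdef, mul_pow]
          ring
  -- assemble the sums
  set F : Finset (Finset Eg) := Finset.univ.filter
    (fun γ : Finset Eg => ConnectedSub edge γ ∧ v ∈ vertexSet edge γ) with hF
  set Ev : Finset Eg := univ.filter fun e : Eg => v ∈ edge e with hEv
  set K : ℕ := Fintype.card Eg with hK
  have hFsub : F ⊆ Ev.biUnion fun e => polyAt edge K e := by
    intro γ hγ
    rw [hF, mem_filter] at hγ
    obtain ⟨-, hconn, hv⟩ := hγ
    rw [vertexSet, mem_biUnion] at hv
    obtain ⟨e, heγ, hve⟩ := hv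
    apply mem_biUnion.mpr
    refine ⟨e, mem_filter.mpr ⟨mem_univ _, hve⟩, ?_⟩
    rw [polyAt, mem_filter]
    exact ⟨mem_univ _, hconn, heγ, card_le_univ γ⟩
  have hsum1 : ∑ γ ∈ F, μ ^ γ.card ≤ ((Δ:ℝ)) * aa := by
    calc ∑ γ ∈ F, μ ^ γ.card
        ≤ ∑ γ ∈ Ev.biUnion (fun e => polyAt edge K e), μ ^ γ.card := by
          apply sum_le_sum_of_subset_of_nonneg hFsub
          intro γ _ _
          exact pow_nonneg hμ0.le _
      _ ≤ ∑ e ∈ Ev, ∑ γ ∈ polyAt edge K e, μ ^ γ.card :=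
          sum_biUnion_le' Ev _ _ fun γ => pow_nonneg hμ0.le _
      _ ≤ ∑ e ∈ Ev, aa := sum_le_sum fun e _ => recursion edge μ aa hμ0.le haa0.le hcond K e
      _ = (Ev.card : ℝ) * aa := by rw [sum_const, nsmul_eq_mul]
      _ ≤ ((Δ:ℝ)) * aa := by
          apply mul_le_mul_of_nonneg_right _ haa0.le
          rw [hEv]
          calc ((univ.filter fun e : Eg => v ∈ edge e).card : ℝ) ≤ (Δn : ℝ) := by
                exact_mod_cast hdegnat v
            _ = (Δ:ℝ) := hΔnR
  have hfinal : P * ((Δ:ℝ) * aa) ≤ 1 / (2 * ((r:ℝ) - 1)) := by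
    have heq : P * ((Δ:ℝ) * aa) = Real.exp (1 / (2 * ((r:ℝ) - 1)) + -(1/2)) / (2 * ((r:ℝ) - 1)) := by
      rw [hPdef, haadef, Real.exp_add]
      field_simp
    rw [heq]
    have hle1 : Real.exp (1 / (2 * ((r:ℝ) - 1)) + -(1/2)) ≤ 1 := by
      rw [Real.exp_le_one_iff]
      have h2 : (2:ℝ) ≤ 2 * ((r:ℝ) - 1) := by linarith
      have := one_div_le_one_div_of_le (by norm_num : (0:ℝ) < 2) h2
      linarith
    apply div_le_div_of_nonneg_right ?_ ?_
    · exact hle1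
    · linarith
  calc ∑ γ ∈ F, ‖w γ‖ *
        Real.exp ((1 / 2) * (((vertexSet edge γ).card : ℝ) / ((r:ℝ) - 1) + (γ.card : ℝ)))
      ≤ ∑ γ ∈ F, P * μ ^ γ.card := by
        apply sum_le_sum
        intro γ hγ
        rw [hF, mem_filter] at hγ
        exact hterm γ hγ.2.1
    _ = P * ∑ γ ∈ F, μ ^ γ.card := by rw [mul_sum]
    _ ≤ P * ((Δ:ℝ) * aa) := mul_le_mul_of_nonneg_left hsum1 hP0.le
    _ ≤ 1 / (2 * ((r:ℝ) - 1)) := hfinal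

end Stmt3
end

section
/- Let G = (V, E) be a finite multigraph with an interaction φ : E → ℝ, and let β ∈ ℂ. Define Z_Ising(G;β) = 2^{−|V|} Σ_{σ ∈ {−1,+1}^V} Π_{ε={u,v} ∈ E} e^{−β φ(ε) σ_u σ_v}. Then Z_Ising(G;β) = Σ_{S ⊆ E} Π_{γ ∈ comp(S)} w_γ, where comp(S) denotes the set of connected components of the subgraph with edge set S (and vertex set the union of the endpoints of edges in S), and for a connected subgraph γ, w_γ = 2^{−|V(γ)|} Σ_{σ ∈ {−1,+1}^{V(γ)}} Π_{{u,v} ∈ E(γ)} ( e^{−β φ({u,v}) σ_u σ_v} − 1 ). The empty edge set S = ∅ contributes 1. -/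
open scoped Classical

namespace Stmt6

variable {V Eg : Type*}

/-- The spin `±1` associated to a Boolean configuration value. -/
def spin (b : Bool) : ℝ := if b then 1 else -1

/-- The product `σ_u σ_v` of the spins at the two endpoints of an (unordered) edge. -/
def spinProd (σ : V → Bool) : Sym2 V → ℝ :=
  Sym2.lift ⟨fun u v => spin (σ u) * spin (σ v), fun _ _ => mul_comm _ _⟩

/-- The normalized Ising partition function
`Z_Ising(G;β) = 2^{−|V|} Σ_{σ ∈ {−1,+1}^V} Π_{ε={u,v} ∈ E} e^{−β φ(ε) σ_u σ_v}`. -/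
noncomputable def Zising [Fintype V] [Fintype Eg]
    (ends : Eg → Sym2 V) (φ : Eg → ℝ) (β : ℂ) : ℂ :=
  (2 : ℂ) ^ (-(Fintype.card V : ℤ)) *
    ∑ σ : V → Bool, ∏ e : Eg, Complex.exp (-β * (φ e : ℂ) * (spinProd σ (ends e) : ℝ))

/-- The vertex set of the subgraph determined by a set `S` of edges. -/
noncomputable def vertexSet [Fintype V] (ends : Eg → Sym2 V) (S : Finset Eg) : Finset V :=
  Finset.univ.filter (fun v => ∃ e ∈ S, v ∈ ends e)

/-- The subgraph determined by `S` is connected: `S` is nonempty and any two edges of `S`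
are joined by a chain of edges of `S` in which consecutive edges share a vertex. -/
def ConnectedSub (ends : Eg → Sym2 V) (S : Finset Eg) : Prop :=
  S.Nonempty ∧ ∀ a ∈ S, ∀ b ∈ S,
    Relation.ReflTransGen (fun x y => x ∈ S ∧ y ∈ S ∧ ∃ v, v ∈ ends x ∧ v ∈ ends y) a b

/-- `T` is a (maximal) connected component of the subgraph determined by `S`. -/
def IsComponent (ends : Eg → Sym2 V) (S T : Finset Eg) : Prop :=
  T ⊆ S ∧ ConnectedSub ends T ∧
    ∀ T' : Finset Eg, T ⊆ T' → T' ⊆ S → ConnectedSub ends T' → T' = T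

/-- The set `comp(S)` of maximal connected components of the subgraph determined by `S`. -/
noncomputable def comp [Fintype Eg] (ends : Eg → Sym2 V) (S : Finset Eg) : Finset (Finset Eg) :=
  Finset.univ.filter (fun T => IsComponent ends S T)

/-- The polymer weight
`w_γ = 2^{−|V(γ)|} Σ_{σ ∈ {−1,+1}^{V(γ)}} Π_{{u,v} ∈ E(γ)} (e^{−β φ({u,v}) σ_u σ_v} − 1)`. -/
noncomputable def weight [Fintype V] (ends : Eg → Sym2 V) (φ : Eg → ℝ) (β : ℂ)
    (γ : Finset Eg) : ℂ :=
  (2 : ℂ) ^ (-((vertexSet ends γ).card : ℤ)) *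
    ∑ σ : {v : V // v ∈ vertexSet ends γ} → Bool, ∏ e ∈ γ,
      (Complex.exp (-β * (φ e : ℂ) *
        (spinProd (fun v => if h : v ∈ vertexSet ends γ then σ ⟨v, h⟩ else false)
          (ends e) : ℝ)) - 1)

/-! ### Auxiliary lemmas -/

section Sums

variable [Fintype V]

lemma sum_pi_bool_split (A : Finset V) (F : (V → Bool) → ℂ) :
    ∑ σ : V → Bool, F σ =
      ∑ τ : {v : V // v ∈ A} → Bool, ∑ ρ : {v : V // ¬ v ∈ A} → Bool,
        F (fun v => if h : v ∈ A then τ ⟨v, h⟩ else ρ ⟨v, h⟩) := by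
  classical
  rw [← Equiv.sum_comp (Equiv.piEquivPiSubtypeProd (fun v : V => v ∈ A) (fun _ => Bool)).symm F,
    Fintype.sum_prod_type]
  refine Finset.sum_congr rfl fun τ _ => Finset.sum_congr rfl fun ρ _ => ?_
  congr 1

lemma card_pi_bool_compl (A : Finset V) :
    Fintype.card ({v : V // ¬ v ∈ A} → Bool) = 2 ^ (Fintype.card V - A.card) := by
  classical
  rw [Fintype.card_fun, Fintype.card_bool, Fintype.card_subtype_compl]
  congr 1
  rw [Fintype.card_coe]

lemma sum_pi_bool_restrict (A : Finset V) (F : (V → Bool) → ℂ)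
    (hF : ∀ σ σ' : V → Bool, (∀ v ∈ A, σ v = σ' v) → F σ = F σ') :
    ∑ σ : V → Bool, F σ =
      2 ^ (Fintype.card V - A.card) *
        ∑ τ : {v : V // v ∈ A} → Bool, F (fun v => if h : v ∈ A then τ ⟨v, h⟩ else false) := by
  classical
  rw [sum_pi_bool_split A F]
  have h1 : ∀ (τ : {v : V // v ∈ A} → Bool) (ρ : {v : V // ¬ v ∈ A} → Bool),
      F (fun v => if h : v ∈ A then τ ⟨v, h⟩ else ρ ⟨v, h⟩)
        = F (fun v => if h : v ∈ A then τ ⟨v, h⟩ else false) := by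
    intro τ ρ
    apply hF
    intro v hv
    simp [hv]
  simp_rw [h1, Finset.sum_const, Finset.card_univ, nsmul_eq_mul]
  rw [← Finset.mul_sum, card_pi_bool_compl]
  push_cast
  ring


lemma sum_pi_bool_mul (A B : Finset V) (hAB : ∀ v ∈ A, v ∉ B)
    (F G : (V → Bool) → ℂ)
    (hF : ∀ σ σ' : V → Bool, (∀ v ∈ A, σ v = σ' v) → F σ = F σ')
    (hG : ∀ σ σ' : V → Bool, (∀ v ∈ B, σ v = σ' v) → G σ = G σ') :
    (∑ σ : V → Bool, F σ) * (∑ σ : V → Bool, G σ) =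
      2 ^ (Fintype.card V) * ∑ σ : V → Bool, F σ * G σ := by
  classical
  set c : ({v : V // v ∈ A} → Bool) → ({v : V // ¬ v ∈ A} → Bool) → (V → Bool) :=
    fun τ ρ => fun v => if h : v ∈ A then τ ⟨v, h⟩ else ρ ⟨v, h⟩ with hc
  have hFc : ∀ τ ρ, F (c τ ρ) = F (c τ (fun _ => false)) := by
    intro τ ρ
    apply hF
    intro v hv
    simp [c, hv]
  have hGc : ∀ τ ρ, G (c τ ρ) = G (c (fun _ => false) ρ) := by
    intro τ ρ
    apply hG
    intro v hv
    have hvA : ¬ v ∈ A := fun hvA => hAB v hvA hv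
    simp [c, hvA]
  have e1 : (∑ σ : V → Bool, F σ)
      = (Fintype.card ({v : V // ¬ v ∈ A} → Bool) : ℂ) *
        ∑ τ : {v : V // v ∈ A} → Bool, F (c τ (fun _ => false)) := by
    rw [sum_pi_bool_split A F]
    simp only [c] at hFc ⊢
    simp_rw [hFc, Finset.sum_const, Finset.card_univ, nsmul_eq_mul]
    rw [← Finset.mul_sum]
  have e2 : (∑ σ : V → Bool, G σ)
      = (Fintype.card ({v : V // v ∈ A} → Bool) : ℂ) *
        ∑ ρ : {v : V // ¬ v ∈ A} → Bool, G (c (fun _ => false) ρ) := by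
    rw [sum_pi_bool_split A G]
    simp only [c] at hGc ⊢
    simp_rw [hGc]
    rw [Finset.sum_const, Finset.card_univ, nsmul_eq_mul]
  have e3 : (∑ σ : V → Bool, F σ * G σ)
      = (∑ τ : {v : V // v ∈ A} → Bool, F (c τ (fun _ => false))) *
        (∑ ρ : {v : V // ¬ v ∈ A} → Bool, G (c (fun _ => false) ρ)) := by
    rw [sum_pi_bool_split A (fun σ => F σ * G σ), Finset.sum_mul_sum]
    refine Finset.sum_congr rfl fun τ _ => Finset.sum_congr rfl fun ρ _ => ?_
    rw [← hFc τ ρ, ← hGc τ ρ]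
  have hcards : (Fintype.card ({v : V // ¬ v ∈ A} → Bool) : ℂ) *
      (Fintype.card ({v : V // v ∈ A} → Bool) : ℂ) = 2 ^ (Fintype.card V) := by
    have hle := Fintype.card_subtype_le (fun v : V => v ∈ A)
    rw [Fintype.card_fun, Fintype.card_fun, Fintype.card_bool, Fintype.card_subtype_compl]
    simp only [Fintype.card_coe]
    push_cast
    rw [← pow_add]
    congr 1
    have hle := Finset.card_le_univ A
    omega
  rw [e1, e2, e3, ← hcards]
  ring

end Sums

/-! ### Graph lemmas -/

section Graph

variable (ends : Eg → Sym2 V)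

/-- The "sharing a vertex within `S`" relation on edges. -/
def ERel (S : Finset Eg) (x y : Eg) : Prop :=
  x ∈ S ∧ y ∈ S ∧ ∃ v, v ∈ ends x ∧ v ∈ ends y

lemma erel_symm (S : Finset Eg) : Symmetric (ERel ends S) := by
  rintro x y ⟨hx, hy, v, hvx, hvy⟩
  exact ⟨hy, hx, v, hvy, hvx⟩

lemma connectedSub_def (S : Finset Eg) : ConnectedSub ends S ↔
    S.Nonempty ∧ ∀ a ∈ S, ∀ b ∈ S, Relation.ReflTransGen (ERel ends S) a b := Iff.rfl

lemma reflTransGen_mono {S S' : Finset Eg} (h : S ⊆ S') {a b : Eg}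
    (hab : Relation.ReflTransGen (ERel ends S) a b) :
    Relation.ReflTransGen (ERel ends S') a b :=
  Relation.ReflTransGen.mono (r := ERel ends S) (p := ERel ends S')
    (fun x y hxy => ⟨h hxy.1, h hxy.2.1, hxy.2.2⟩) _ _ hab

lemma connected_union {S T : Finset Eg} (hS : ConnectedSub ends S) (hT : ConnectedSub ends T)
    {x : Eg} (hxS : x ∈ S) (hxT : x ∈ T) : ConnectedSub ends (S ∪ T) := by
  classical
  have key : ∀ c ∈ S ∪ T, Relation.ReflTransGen (ERel ends (S ∪ T)) c x := by
    intro c hc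
    rcases Finset.mem_union.mp hc with h | h
    · exact reflTransGen_mono ends Finset.subset_union_left (hS.2 c h x hxS)
    · exact reflTransGen_mono ends Finset.subset_union_right (hT.2 c h x hxT)
  refine ⟨⟨x, Finset.mem_union_left _ hxS⟩, fun a ha b hb => ?_⟩
  exact (key a ha).trans
    (((@Relation.ReflTransGen.stdSymm _ _ ⟨fun _ _ h => erel_symm ends _ h⟩).symm _ _) (key b hb))

lemma connected_pair {e f : Eg} {v : V} (hv : v ∈ ends e) (hv' : v ∈ ends f) :
    ConnectedSub ends {e, f} := by
  classical
  have he : e ∈ ({e, f} : Finset Eg) := by simp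
  have hf : f ∈ ({e, f} : Finset Eg) := by simp
  have hef : Relation.ReflTransGen (ERel ends {e, f}) e f :=
    Relation.ReflTransGen.single ⟨he, hf, v, hv, hv'⟩
  have hfe : Relation.ReflTransGen (ERel ends {e, f}) f e :=
    Relation.ReflTransGen.single ⟨hf, he, v, hv', hv⟩
  refine ⟨⟨e, he⟩, fun a ha b hb => ?_⟩
  have hcase : ∀ x ∈ ({e, f} : Finset Eg),
      Relation.ReflTransGen (ERel ends {e, f}) e x := by
    intro x hx
    rcases Finset.mem_insert.mp hx with rfl | hx
    · exact Relation.ReflTransGen.refl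
    · rw [Finset.mem_singleton.mp hx]; exact hef
  exact (((@Relation.ReflTransGen.stdSymm _ _ ⟨fun _ _ h => erel_symm ends _ h⟩).symm _ _) (hcase a ha)).trans
    (hcase b hb)

lemma exists_component {S : Finset Eg} {e : Eg} (he : e ∈ S) :
    ∃ γ : Finset Eg, IsComponent ends S γ ∧ e ∈ γ := by
  classical
  set T := S.filter (fun x => Relation.ReflTransGen (ERel ends S) e x) with hTdef
  have heT : e ∈ T := Finset.mem_filter.mpr ⟨he, Relation.ReflTransGen.refl⟩
  have hTS : T ⊆ S := Finset.filter_subset _ _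
  have hchain : ∀ x, Relation.ReflTransGen (ERel ends S) e x →
      Relation.ReflTransGen (ERel ends T) e x := by
    intro x hx
    induction hx with
    | refl => exact Relation.ReflTransGen.refl
    | tail hab hbc ih =>
      refine ih.tail ?_
      exact ⟨Finset.mem_filter.mpr ⟨hbc.1, hab⟩,
        Finset.mem_filter.mpr ⟨hbc.2.1, hab.tail hbc⟩, hbc.2.2⟩
  refine ⟨T, ⟨hTS, ⟨⟨e, heT⟩, fun a ha b hb => ?_⟩, fun T' hTT' hT'S hT' => ?_⟩, heT⟩
  · have hae := ((@Relation.ReflTransGen.stdSymm _ _ ⟨fun _ _ h => erel_symm ends T h⟩).symm _ _)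
      (hchain a (Finset.mem_filter.mp ha).2)
    exact hae.trans (hchain b (Finset.mem_filter.mp hb).2)
  · refine Finset.Subset.antisymm (fun x hx => ?_) hTT'
    have h1 : Relation.ReflTransGen (ERel ends T') e x := hT'.2 e (hTT' heT) x hx
    exact Finset.mem_filter.mpr ⟨hT'S hx, reflTransGen_mono ends hT'S h1⟩

lemma component_vertex_disjoint {S γ : Finset Eg} (hγ : IsComponent ends S γ)
    {e : Eg} (heS : e ∈ S) (heγ : e ∉ γ) {v : V} (hv : v ∈ ends e)
    {f : Eg} (hf : f ∈ γ) (hvf : v ∈ ends f) : False := by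
  classical
  have hpair : ConnectedSub ends {e, f} := connected_pair ends hv hvf
  have hu : ConnectedSub ends (γ ∪ {e, f}) :=
    connected_union ends hγ.2.1 hpair hf (by simp)
  have hsub : γ ∪ {e, f} ⊆ S := by
    intro x hx
    rcases Finset.mem_union.mp hx with h | h
    · exact hγ.1 h
    · rcases Finset.mem_insert.mp h with rfl | h
      · exact heS
      · rw [Finset.mem_singleton.mp h]; exact hγ.1 hf
  have heq := hγ.2.2 _ Finset.subset_union_left hsub hu
  apply heγ
  rw [← heq]
  simp

lemma components_eq_of_mem {S T T' : Finset Eg} (hT : IsComponent ends S T)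
    (hT' : IsComponent ends S T') {x : Eg} (hx : x ∈ T) (hx' : x ∈ T') : T = T' := by
  have hu := connected_union ends hT.2.1 hT'.2.1 hx hx'
  have hsub : T ∪ T' ⊆ S := Finset.union_subset hT.1 hT'.1
  have h1 := hT.2.2 _ Finset.subset_union_left hsub hu
  have h2 := hT'.2.2 _ Finset.subset_union_right hsub hu
  exact h1.symm.trans h2

lemma isComponent_sdiff {S γ T : Finset Eg} (hγ : IsComponent ends S γ) :
    IsComponent ends (S \ γ) T ↔ IsComponent ends S T ∧ T ≠ γ := by
  classical
  constructor
  · intro h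
    have hTS : T ⊆ S := h.1.trans (Finset.sdiff_subset)
    have hne : T ≠ γ := by
      rintro rfl
      obtain ⟨t, ht⟩ := h.2.1.1
      exact (Finset.mem_sdiff.mp (h.1 ht)).2 ht
    refine ⟨⟨hTS, h.2.1, fun T' hTT' hT'S hT' => ?_⟩, hne⟩
    have hT'sd : T' ⊆ S \ γ := by
      intro x hx
      rw [Finset.mem_sdiff]
      refine ⟨hT'S hx, fun hxγ => ?_⟩
      have hu : ConnectedSub ends (γ ∪ T') := connected_union ends hγ.2.1 hT' hxγ hx
      have hsub : γ ∪ T' ⊆ S := Finset.union_subset hγ.1 hT'S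
      have heq := hγ.2.2 _ Finset.subset_union_left hsub hu
      obtain ⟨t, ht⟩ := h.2.1.1
      have htγ : t ∈ γ := by
        rw [← heq]
        exact Finset.mem_union_right _ (hTT' ht)
      exact (Finset.mem_sdiff.mp (h.1 ht)).2 htγ
    exact h.2.2 T' hTT' hT'sd hT'
  · rintro ⟨h, hne⟩
    have hTsd : T ⊆ S \ γ := by
      intro x hx
      rw [Finset.mem_sdiff]
      refine ⟨h.1 hx, fun hxγ => hne (components_eq_of_mem ends h hγ hx hxγ)⟩
    exact ⟨hTsd, h.2.1, fun T' hTT' hT'S hT' =>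
      h.2.2 T' hTT' (hT'S.trans Finset.sdiff_subset) hT'⟩

lemma mem_comp_iff [Fintype Eg] {S T : Finset Eg} :
    T ∈ comp ends S ↔ IsComponent ends S T := by
  simp [comp]

lemma comp_sdiff [Fintype Eg] {S γ : Finset Eg} (hγ : IsComponent ends S γ) :
    comp ends (S \ γ) = (comp ends S).erase γ := by
  ext T
  rw [mem_comp_iff, Finset.mem_erase, mem_comp_iff, isComponent_sdiff ends hγ]
  tauto

lemma comp_empty [Fintype Eg] : comp ends (∅ : Finset Eg) = ∅ := by
  ext T
  simp only [mem_comp_iff, Finset.notMem_empty, iff_false]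
  rintro ⟨hsub, ⟨⟨t, ht⟩, -⟩, -⟩
  exact Finset.notMem_empty t (hsub ht)

end Graph

/-! ### Weight lemmas -/

section Weight

lemma sym2_exists_mem (z : Sym2 V) : ∃ v, v ∈ z := by
  induction z using Sym2.ind with
  | _ u v => exact ⟨u, Sym2.mem_mk_left u v⟩

lemma spinProd_congr (σ σ' : V → Bool) (z : Sym2 V) (h : ∀ v ∈ z, σ v = σ' v) :
    spinProd σ z = spinProd σ' z := by
  induction z using Sym2.ind with
  | _ u v =>
    simp only [spinProd, Sym2.lift_mk]
    rw [h u (Sym2.mem_mk_left u v), h v (Sym2.mem_mk_right u v)]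

variable [Fintype V] (ends : Eg → Sym2 V)

lemma mem_vertexSet_of {S : Finset Eg} {e : Eg} (he : e ∈ S) {v : V} (hv : v ∈ ends e) :
    v ∈ vertexSet ends S :=
  Finset.mem_filter.mpr ⟨Finset.mem_univ v, e, he, hv⟩

/-- The unnormalized sum over global configurations. -/
noncomputable def gsum (φ : Eg → ℝ) (β : ℂ) (S : Finset Eg) : ℂ :=
  ∑ σ : V → Bool, ∏ e ∈ S,
    (Complex.exp (-β * (φ e : ℂ) * (spinProd σ (ends e) : ℝ)) - 1)

lemma prod_dep (φ : Eg → ℝ) (β : ℂ) (S : Finset Eg) (σ σ' : V → Bool)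
    (h : ∀ v ∈ vertexSet ends S, σ v = σ' v) :
    ∏ e ∈ S, (Complex.exp (-β * (φ e : ℂ) * (spinProd σ (ends e) : ℝ)) - 1) =
      ∏ e ∈ S, (Complex.exp (-β * (φ e : ℂ) * (spinProd σ' (ends e) : ℝ)) - 1) := by
  refine Finset.prod_congr rfl fun e he => ?_
  rw [spinProd_congr σ σ' (ends e) (fun v hv => h v (mem_vertexSet_of ends he hv))]

lemma weight_eq_gsum (φ : Eg → ℝ) (β : ℂ) (S : Finset Eg) :
    weight ends φ β S = (2 : ℂ) ^ (-(Fintype.card V : ℤ)) * gsum ends φ β S := by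
  classical
  have hA := Finset.card_le_univ (vertexSet ends S)
  have hres := sum_pi_bool_restrict (vertexSet ends S)
    (fun σ => ∏ e ∈ S, (Complex.exp (-β * (φ e : ℂ) * (spinProd σ (ends e) : ℝ)) - 1))
    (fun σ σ' h => prod_dep ends φ β S σ σ' h)
  beta_reduce at hres
  rw [gsum, hres, weight, ← mul_assoc]
  congr 1
  rw [← zpow_natCast (2 : ℂ) (Fintype.card V - (vertexSet ends S).card),
    ← zpow_add₀ (two_ne_zero (α := ℂ))]
  congr 1
  omega

lemma gsum_union (φ : Eg → ℝ) (β : ℂ) (A B : Finset Eg)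
    (hV : ∀ v ∈ vertexSet ends A, v ∉ vertexSet ends B) :
    gsum ends φ β A * gsum ends φ β B = 2 ^ (Fintype.card V) * gsum ends φ β (A ∪ B) := by
  classical
  have hdisj : Disjoint A B := by
    rw [Finset.disjoint_left]
    intro e heA heB
    obtain ⟨v, hv⟩ := sym2_exists_mem (ends e)
    exact hV v (mem_vertexSet_of ends heA hv) (mem_vertexSet_of ends heB hv)
  have hmul := sum_pi_bool_mul (vertexSet ends A) (vertexSet ends B) hV
    (fun σ => ∏ e ∈ A, (Complex.exp (-β * (φ e : ℂ) * (spinProd σ (ends e) : ℝ)) - 1))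
    (fun σ => ∏ e ∈ B, (Complex.exp (-β * (φ e : ℂ) * (spinProd σ (ends e) : ℝ)) - 1))
    (fun σ σ' h => prod_dep ends φ β A σ σ' h)
    (fun σ σ' h => prod_dep ends φ β B σ σ' h)
  beta_reduce at hmul
  rw [gsum, gsum, gsum, hmul]
  congr 1
  refine Finset.sum_congr rfl fun σ _ => ?_
  rw [← Finset.prod_union hdisj]

lemma weight_union (φ : Eg → ℝ) (β : ℂ) (A B : Finset Eg)
    (hV : ∀ v ∈ vertexSet ends A, v ∉ vertexSet ends B) :
    weight ends φ β (A ∪ B) = weight ends φ β A * weight ends φ β B := by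
  have key := gsum_union ends φ β A B hV
  have hpow : (2 : ℂ) ^ (-(Fintype.card V : ℤ)) * 2 ^ (Fintype.card V) = 1 := by
    rw [← zpow_natCast (2 : ℂ) (Fintype.card V), ← zpow_add₀ (two_ne_zero (α := ℂ))]
    simp
  rw [weight_eq_gsum, weight_eq_gsum, weight_eq_gsum]
  calc (2 : ℂ) ^ (-(Fintype.card V : ℤ)) * gsum ends φ β (A ∪ B)
      = ((2 : ℂ) ^ (-(Fintype.card V : ℤ)) * 2 ^ (Fintype.card V)) *
        ((2 : ℂ) ^ (-(Fintype.card V : ℤ)) * gsum ends φ β (A ∪ B)) := by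
        rw [hpow, one_mul]
    _ = (2 : ℂ) ^ (-(Fintype.card V : ℤ)) * ((2 : ℂ) ^ (-(Fintype.card V : ℤ)) *
        (2 ^ (Fintype.card V) * gsum ends φ β (A ∪ B))) := by ring
    _ = (2 : ℂ) ^ (-(Fintype.card V : ℤ)) * ((2 : ℂ) ^ (-(Fintype.card V : ℤ)) *
        (gsum ends φ β A * gsum ends φ β B)) := by rw [key]
    _ = (2 : ℂ) ^ (-(Fintype.card V : ℤ)) * gsum ends φ β A *
        ((2 : ℂ) ^ (-(Fintype.card V : ℤ)) * gsum ends φ β B) := by ring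

lemma weight_empty (φ : Eg → ℝ) (β : ℂ) : weight ends φ β (∅ : Finset Eg) = 1 := by
  rw [weight_eq_gsum]
  have hg : gsum ends φ β (∅ : Finset Eg) = 2 ^ (Fintype.card V) := by
    simp [gsum, Finset.card_univ, Fintype.card_fun]
  rw [hg, ← zpow_natCast (2 : ℂ) (Fintype.card V), ← zpow_add₀ (two_ne_zero (α := ℂ))]
  simp

lemma weight_eq_prod_comp [Fintype Eg] (φ : Eg → ℝ) (β : ℂ) (S : Finset Eg) :
    weight ends φ β S = ∏ γ ∈ comp ends S, weight ends φ β γ := by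
  classical
  induction S using Finset.strongInduction with
  | _ S ih =>
    rcases Finset.eq_empty_or_nonempty S with rfl | ⟨e, he⟩
    · rw [comp_empty, Finset.prod_empty, weight_empty]
    · obtain ⟨γ, hγ, heγ⟩ := exists_component ends he
      have hγS : γ ⊆ S := hγ.1
      have hγne : γ.Nonempty := hγ.2.1.1
      have hssub : S \ γ ⊂ S := Finset.sdiff_ssubset hγS hγne
      have hVdisj : ∀ v ∈ vertexSet ends γ, v ∉ vertexSet ends (S \ γ) := by
        intro v hvγ hvS
        obtain ⟨-, f, hf, hvf⟩ := Finset.mem_filter.mp hvγ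
        obtain ⟨-, e', he', hve'⟩ := Finset.mem_filter.mp hvS
        exact component_vertex_disjoint ends hγ (Finset.mem_sdiff.mp he').1
          (Finset.mem_sdiff.mp he').2 hve' hf hvf
      have hcomp : comp ends S = insert γ (comp ends (S \ γ)) := by
        rw [comp_sdiff ends hγ, Finset.insert_erase ((mem_comp_iff ends).mpr hγ)]
      have hγnotin : γ ∉ comp ends (S \ γ) := by
        rw [comp_sdiff ends hγ]
        exact Finset.notMem_erase _ _
      calc weight ends φ β S = weight ends φ β (γ ∪ S \ γ) := by
            rw [Finset.union_sdiff_of_subset hγS]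
        _ = weight ends φ β γ * weight ends φ β (S \ γ) :=
            weight_union ends φ β γ (S \ γ) hVdisj
        _ = weight ends φ β γ * ∏ γ' ∈ comp ends (S \ γ), weight ends φ β γ' := by
            rw [ih _ hssub]
        _ = ∏ γ' ∈ comp ends S, weight ends φ β γ' := by
            rw [hcomp, Finset.prod_insert hγnotin]

end Weight


/-- **Lemma 5 of the paper.** The Ising model partition function admits the abstract
polymer model representation `Z_Ising(G;β) = Σ_{S ⊆ E} Π_{γ ∈ comp(S)} w_γ`. -/
theorem ising_polymer_representation [Fintype V] [Fintype Eg]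
    (ends : Eg → Sym2 V) (hloop : ∀ e : Eg, ¬ (ends e).IsDiag)
    (φ : Eg → ℝ) (β : ℂ) :
    Zising ends φ β =
      ∑ S : Finset Eg, ∏ γ ∈ comp ends S, weight ends φ β γ := by
  classical
  have expand : ∀ σ : V → Bool,
      (∏ e : Eg, Complex.exp (-β * (φ e : ℂ) * (spinProd σ (ends e) : ℝ))) =
      ∑ S : Finset Eg, ∏ e ∈ S,
        (Complex.exp (-β * (φ e : ℂ) * (spinProd σ (ends e) : ℝ)) - 1) := by
    intro σ
    have h := Finset.prod_add
      (fun e => Complex.exp (-β * (φ e : ℂ) * (spinProd σ (ends e) : ℝ)) - 1)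
      (fun _ => (1 : ℂ)) Finset.univ
    simp only [sub_add_cancel, Finset.prod_const_one, mul_one, Finset.powerset_univ] at h
    exact h
  rw [Zising]
  simp_rw [expand]
  rw [Finset.sum_comm, Finset.mul_sum]
  refine Finset.sum_congr rfl fun S _ => ?_
  rw [← weight_eq_prod_comp ends φ β S, weight_eq_gsum ends φ β S, gsum]

end Stmt6
end

section
/- Let G = (V, E) be a multihypergraph whose edge set E is linearly ordered, with a finite-dimensional Hilbert space H_v = ℂ^{d_v} at each vertex and a unitary operator U_ε on H_ε = ⨂_{v∈ε} H_v assigned to each edge ε, regarded as acting on H_G = ⨂_{v∈V} H_v by tensoring with the identity. Let U_G = Π_{ε∈E} U_ε (product taken in the order of the edge labels) and A_{U_G} = ⟨0^{|V|}| U_G |0^{|V|}⟩. Then A_{U_G} = Σ_{S ⊆ E} Π_{γ ∈ comp(S)} w_γ, where comp(S) is the set of maximal connected components of the subgraph with edge set S, and for a connected subgraph γ, w_γ = ⟨0^{|V(γ)|}| Π_{ε ∈ E(γ)} (U_ε − I) |0^{|V(γ)|}⟩, the product over E(γ) taken in the order of the edge labels and the operators U_ε − I regarded as acting on ⨂_{v∈V(γ)}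 H_v. The empty set S = ∅ contributes 1. -/
open scoped Classical Matrix
set_option linter.unusedSectionVars false
set_option maxHeartbeats 1000000

namespace Stmt9

variable {V Eg : Type*}

/-- Configurations of the qudits in a subset `T` of the vertices: the index set of a
basis of `⨂_{v∈T} ℂ^{d_v}`. -/
abbrev Loc {V : Type*} (dim : V → ℕ) (T : Finset V) : Type _ := ∀ v : T, Fin (dim v)

/-- Configurations of all qudits: the index set of a basis of `H_G = ⨂_{v∈V} ℂ^{d_v}`. -/
abbrev Glob (dim : V → ℕ) : Type _ := ∀ v : V, Fin (dim v)

/-- The lift of an operator on `⨂_{v∈S} ℂ^{d_v}` to an operator on `⨂_{v∈T} ℂ^{d_v}`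
(for `S ⊆ T`), tensoring with the identity on the qudits outside `S`. -/
noncomputable def liftMat {dim : V → ℕ} {S T : Finset V} (h : S ⊆ T)
    (A : Matrix (Loc dim S) (Loc dim S) ℂ) : Matrix (Loc dim T) (Loc dim T) ℂ :=
  fun x y => (if ∀ v : T, ↑v ∉ S → x v = y v then 1 else 0) *
    A (fun v => x ⟨v.1, h v.2⟩) (fun v => y ⟨v.1, h v.2⟩)

/-- The lift of an operator on `⨂_{v∈S} ℂ^{d_v}` to an operator on the full space
`H_G`, tensoring with the identity elsewhere. -/
noncomputable def liftGlobal (dim : V → ℕ) (S : Finset V)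
    (A : Matrix (Loc dim S) (Loc dim S) ℂ) : Matrix (Glob dim) (Glob dim) ℂ :=
  fun x y => (if ∀ v : V, v ∉ S → x v = y v then 1 else 0) *
    A (fun v => x v) (fun v => y v)

/-- The ordered product `Π_{ε ∈ S} f(ε)` of matrices, taken in the order of the edge
labels (the linear order on `Eg`). -/
noncomputable def oprod [LinearOrder Eg] {n : Type*} [Fintype n] [DecidableEq n]
    (S : Finset Eg) (f : Eg → Matrix n n ℂ) : Matrix n n ℂ :=
  ((S.sort (· ≤ ·)).map f).prod

/-- The vertex set `V(S) = ⋃_{ε∈S} ε` of the subgraph determined by a set `S` of edges,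
where `edge : Eg → Finset V` assigns to each labelled edge the set of vertices it
contains. -/
abbrev vertexSet [DecidableEq V] (edge : Eg → Finset V) (S : Finset Eg) : Finset V :=
  S.biUnion edge

/-- A subgraph determined by a set `S` of edges is connected. -/
def ConnectedSub [DecidableEq V] (edge : Eg → Finset V) (S : Finset Eg) : Prop :=
  S.Nonempty ∧ ∀ a ∈ S, ∀ b ∈ S,
    Relation.ReflTransGen (fun x y => x ∈ S ∧ y ∈ S ∧ (edge x ∩ edge y).Nonempty) a b

/-- `T` is a maximal connected component of the subgraph determined by `S`. -/
def IsComponent [DecidableEq V] (edge : Eg → Finset V) (S T : Finset Eg) : Prop :=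
  T ⊆ S ∧ ConnectedSub edge T ∧
    ∀ T' : Finset Eg, T ⊆ T' → T' ⊆ S → ConnectedSub edge T' → T' = T

/-- The set `comp(S)` of maximal connected components of the subgraph determined by `S`. -/
noncomputable def comp [DecidableEq V] [Fintype Eg] (edge : Eg → Finset V) (S : Finset Eg) :
    Finset (Finset Eg) :=
  Finset.univ.filter (fun T => IsComponent edge S T)

/-- The polymer weight
`w_γ = ⟨0^{|V(γ)|}| Π_{ε∈E(γ)} (U_ε − I) |0^{|V(γ)|}⟩`, the product taken in the
order of the edge labels, with `U_ε − I` acting on `⨂_{v∈V(γ)} ℂ^{d_v}`. -/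
noncomputable def weight [DecidableEq V] [LinearOrder Eg] (edge : Eg → Finset V)
    (dim : V → ℕ) (hd : ∀ v, 0 < dim v)
    (A : ∀ e : Eg, Matrix (Loc dim (edge e)) (Loc dim (edge e)) ℂ)
    (γ : Finset Eg) : ℂ :=
  oprod γ (fun e =>
      if he : e ∈ γ then
        (liftMat (Finset.subset_biUnion_of_mem edge he) (A e) - 1 :
          Matrix (Loc dim (vertexSet edge γ)) (Loc dim (vertexSet edge γ)) ℂ)
      else 1)
    (fun v => ⟨0, hd v⟩) (fun v => ⟨0, hd v⟩)

section LiftLemmas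

variable [DecidableEq V] [Fintype V] {dim : V → ℕ}

/-- update `x` on `T` by `w` -/
noncomputable def upd (x : Glob dim) (T : Finset V) (w : Loc dim T) : Glob dim :=
  fun v => if h : v ∈ T then w ⟨v, h⟩ else x v

@[simp] theorem upd_mem (x : Glob dim) (T : Finset V) (w : Loc dim T) (v : V) (h : v ∈ T) :
    upd x T w v = w ⟨v, h⟩ := dif_pos h

@[simp] theorem upd_not_mem (x : Glob dim) (T : Finset V) (w : Loc dim T) (v : V) (h : v ∉ T) :
    upd x T w v = x v := dif_neg h

@[simp] theorem upd_restrict (x : Glob dim) (T : Finset V) (w : Loc dim T) :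
    (fun v : T => upd x T w v) = w := by
  funext v; exact dif_pos v.2

theorem sum_glob (T : Finset V) (x : Glob dim) (g : Glob dim → ℂ)
    (h0 : ∀ z : Glob dim, (¬ ∀ v ∉ T, x v = z v) → g z = 0) :
    ∑ z : Glob dim, g z = ∑ w : Loc dim T, g (upd x T w) := by
  classical
  rw [← Finset.sum_filter_of_ne (s := Finset.univ)
    (p := fun z => ∀ v ∉ T, x v = z v) (fun z _ hgz => by
      by_contra h; exact hgz (h0 z h))]
  refine Finset.sum_nbij' (fun z => (fun v : T => z v)) (fun w => upd x T w) ?_ ?_ ?_ ?_ ?_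
  · intro a _; exact Finset.mem_univ _
  · intro w _
    simp only [Finset.mem_filter, Finset.mem_univ, true_and]
    intro v hv; exact (upd_not_mem x T w v hv).symm
  · intro z hz
    simp only [Finset.mem_filter, Finset.mem_univ, true_and] at hz
    funext v
    by_cases h : v ∈ T
    · simp [h]
    · simp [h, hz v h]
  · intro w _; exact upd_restrict x T w
  · intro z hz
    simp only [Finset.mem_filter, Finset.mem_univ, true_and] at hz
    have : upd x T (fun v : T => z v) = z := by
      funext v
      by_cases h : v ∈ T
      · simp [h]
      · simp [h, hz v h]
    rw [this]

theorem liftGlobal_one (S : Finset V) :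
    liftGlobal dim S (1 : Matrix (Loc dim S) (Loc dim S) ℂ) = 1 := by
  ext x y
  simp only [liftGlobal, Matrix.one_apply]
  by_cases h1 : ∀ v, v ∉ S → x v = y v
  · by_cases h2 : (fun v : S => x v) = (fun v : S => y v)
    · have hxy : x = y := funext fun v => by
        by_cases hv : v ∈ S
        · exact congrFun h2 ⟨v, hv⟩
        · exact h1 v hv
      simp [h1, h2, hxy]
    · have hxy : x ≠ y := fun h => h2 (by rw [h])
      simp [h1, h2, hxy]
  · have hxy : x ≠ y := fun h => h1 (fun v _ => by rw [h])
    simp [h1, hxy]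

theorem liftGlobal_sub_one (S : Finset V) (B : Matrix (Loc dim S) (Loc dim S) ℂ) :
    liftGlobal dim S (B - 1) = liftGlobal dim S B - 1 := by
  have : liftGlobal dim S (B - 1) = liftGlobal dim S B - liftGlobal dim S 1 := by
    ext x y
    simp only [liftGlobal, Matrix.sub_apply]
    ring
  rw [this, liftGlobal_one]

theorem liftGlobal_mul (T : Finset V) (B C : Matrix (Loc dim T) (Loc dim T) ℂ) :
    liftGlobal dim T B * liftGlobal dim T C = liftGlobal dim T (B * C) := by
  ext x y
  rw [Matrix.mul_apply]
  rw [sum_glob T x _ (by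
    intro z hz
    simp only [liftGlobal]
    rw [if_neg hz, zero_mul, zero_mul])]
  simp only [liftGlobal, Matrix.mul_apply, upd_restrict]
  have hcond : ∀ w : Loc dim T, (∀ v ∉ T, x v = upd x T w v) := by
    intro w v hv; exact (upd_not_mem x T w v hv).symm
  have hcond2 : ∀ w : Loc dim T,
      (∀ v ∉ T, upd x T w v = y v) ↔ (∀ v ∉ T, x v = y v) := by
    intro w
    constructor
    · intro h v hv; rw [← upd_not_mem x T w v hv]; exact h v hv
    · intro h v hv; rw [upd_not_mem x T w v hv]; exact h v hv
  rw [Finset.mul_sum]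
  refine Finset.sum_congr rfl fun w _ => ?_
  rw [if_pos (hcond w)]
  by_cases h : ∀ v ∉ T, x v = y v
  · rw [if_pos ((hcond2 w).2 h), if_pos h]; ring
  · rw [if_neg (fun hh => h ((hcond2 w).1 hh)), if_neg h]; ring

theorem liftGlobal_liftMat {S T : Finset V} (h : S ⊆ T)
    (B : Matrix (Loc dim S) (Loc dim S) ℂ) :
    liftGlobal dim T (liftMat h B) = liftGlobal dim S B := by
  ext x y
  simp only [liftGlobal, liftMat]
  by_cases h1 : ∀ v, v ∉ S → x v = y v
  · have hT : ∀ v, v ∉ T → x v = y v := fun v hv => h1 v (fun hvS => hv (h hvS))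
    have hTS : ∀ v : T, ↑v ∉ S → x v = y v := fun v hv => h1 v hv
    rw [if_pos hT, if_pos hTS, if_pos h1]; ring
  · push_neg at h1
    obtain ⟨v, hvS, hvxy⟩ := h1
    have hnegS : ¬ (∀ v, v ∉ S → x v = y v) := fun hall => hvxy (hall v hvS)
    by_cases hvT : v ∈ T
    · have hneg1 : ¬ (∀ v : T, ↑v ∉ S → x v = y v) :=
        fun hall => hvxy (hall ⟨v, hvT⟩ hvS)
      rw [if_neg hneg1, if_neg hnegS]
      ring
    · have hneg2 : ¬ (∀ v, v ∉ T → x v = y v) := fun hall => hvxy (hall v hvT)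
      rw [if_neg hneg2, if_neg hnegS]
      ring

/-- product of lifts on disjoint supports: explicit formula -/
theorem liftGlobal_mul_disjoint {T1 T2 : Finset V}
    (hdis : ∀ v, v ∈ T1 → v ∉ T2)
    (B : Matrix (Loc dim T1) (Loc dim T1) ℂ) (C : Matrix (Loc dim T2) (Loc dim T2) ℂ)
    (x y : Glob dim) :
    (liftGlobal dim T1 B * liftGlobal dim T2 C) x y =
      (if ∀ v, v ∉ T1 → v ∉ T2 → x v = y v then (1:ℂ) else 0) *
        (B (fun v : T1 => x v) (fun v : T1 => y v) *
         C (fun v : T2 => x v) (fun v : T2 => y v)) := by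
  rw [Matrix.mul_apply]
  rw [sum_glob T1 x _ (by
    intro z hz
    simp only [liftGlobal]
    rw [if_neg hz, zero_mul, zero_mul])]
  have key : ∀ w : Loc dim T1,
      (liftGlobal dim T1 B x (upd x T1 w)) * (liftGlobal dim T2 C (upd x T1 w) y) =
      (if w = (fun v : T1 => y v) then (1:ℂ) else 0) *
      ((if ∀ v, v ∉ T1 → v ∉ T2 → x v = y v then (1:ℂ) else 0) *
        (B (fun v : T1 => x v) (fun v : T1 => y v) *
         C (fun v : T2 => x v) (fun v : T2 => y v))) := by
    intro w
    simp only [liftGlobal, upd_restrict]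
    rw [if_pos (fun v hv => (upd_not_mem x T1 w v hv).symm)]
    have hrestr2 : (fun v : T2 => upd x T1 w v) = (fun v : T2 => x v) := by
      funext v; exact upd_not_mem x T1 w v (fun hv1 => hdis v hv1 v.2)
    rw [hrestr2]
    have hsplit : (∀ v ∉ T2, upd x T1 w v = y v) ↔
        (w = (fun v : T1 => y v)) ∧ (∀ v, v ∉ T1 → v ∉ T2 → x v = y v) := by
      constructor
      · intro hcnd
        constructor
        · funext v
          have := hcnd v (hdis v v.2)
          rwa [upd_mem x T1 w v v.2] at this
        · intro v hv1 hv2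
          have := hcnd v hv2
          rwa [upd_not_mem x T1 w v hv1] at this
      · rintro ⟨hw, hxy⟩ v hv2
        by_cases hv1 : v ∈ T1
        · rw [upd_mem x T1 w v hv1, hw]
        · rw [upd_not_mem x T1 w v hv1]; exact hxy v hv1 hv2
    by_cases h1 : w = (fun v : T1 => y v) <;>
      by_cases h2 : ∀ v, v ∉ T1 → v ∉ T2 → x v = y v
    · rw [if_pos (hsplit.2 ⟨h1, h2⟩), if_pos h1, if_pos h2, h1]; ring
    · rw [if_neg (fun hh => h2 (hsplit.1 hh).2), if_pos h1, if_neg h2, h1]; ring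
    · rw [if_neg (fun hh => h1 (hsplit.1 hh).1), if_neg h1]; ring
    · rw [if_neg (fun hh => h1 (hsplit.1 hh).1), if_neg h1]; ring
  rw [Finset.sum_congr rfl (fun w _ => key w)]
  rw [← Finset.sum_mul]
  rw [Finset.sum_ite_eq' Finset.univ ((fun v : T1 => y v)) (fun _ => (1:ℂ))]
  simp

theorem liftGlobal_commute {T1 T2 : Finset V}
    (hdis : ∀ v, v ∈ T1 → v ∉ T2)
    (B : Matrix (Loc dim T1) (Loc dim T1) ℂ) (C : Matrix (Loc dim T2) (Loc dim T2) ℂ) :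
    Commute (liftGlobal dim T1 B) (liftGlobal dim T2 C) := by
  have hdis' : ∀ v, v ∈ T2 → v ∉ T1 := fun v h2 h1 => hdis v h1 h2
  ext x y
  rw [liftGlobal_mul_disjoint hdis, liftGlobal_mul_disjoint hdis']
  have : (∀ v, v ∉ T1 → v ∉ T2 → x v = y v) ↔ (∀ v, v ∉ T2 → v ∉ T1 → x v = y v) :=
    ⟨fun h v h2 h1 => h v h1 h2, fun h v h1 h2 => h v h2 h1⟩
  rw [if_congr this rfl rfl]; ring

theorem liftGlobal_apply_diag (T : Finset V) (B : Matrix (Loc dim T) (Loc dim T) ℂ)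
    (x : Glob dim) :
    liftGlobal dim T B x x = B (fun v : T => x v) (fun v : T => x v) := by
  simp [liftGlobal]

end LiftLemmas

section ListLemmas
variable {M : Type*} [Monoid M]

theorem prod_map_ite {α : Type*} (l : List α) (S : Finset α) (f : α → M) :
    (l.map (fun e => if e ∈ S then f e else 1)).prod = ((l.filter (· ∈ S)).map f).prod := by
  induction l with
  | nil => simp
  | cons a t ih =>
    by_cases h : a ∈ S <;> simp [h, ih, List.filter_cons]

theorem prod_filter_split {α : Type*} (p : α → Prop) [DecidablePred p] (l : List α) (f : α → M)
    (hc : ∀ a ∈ l, ∀ b ∈ l, p a → ¬ p b → Commute (f a) (f b)) :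
    (l.map f).prod = ((l.filter (p ·)).map f).prod *
      ((l.filter (fun a => ¬ p a)).map f).prod := by
  induction l with
  | nil => simp
  | cons a t ih =>
    have hc' : ∀ a ∈ t, ∀ b ∈ t, p a → ¬ p b → Commute (f a) (f b) :=
      fun x hx y hy => hc x (List.mem_cons_of_mem a hx) y (List.mem_cons_of_mem a hy)
    by_cases h : p a
    · simp only [List.map_cons, List.prod_cons, ih hc', List.filter_cons]
      simp [h, mul_assoc]
    · simp only [List.map_cons, List.prod_cons, ih hc', List.filter_cons]
      have hcomm : Commute (f a) (((t.filter (p ·)).map f).prod) := by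
        refine (Commute.list_prod_right _ _ ?_)
        intro x hx
        simp only [List.mem_map, List.mem_filter] at hx
        obtain ⟨b, ⟨hbt, hpb⟩, rfl⟩ := hx
        exact (hc b (List.mem_cons_of_mem a hbt) a List.mem_cons_self
          (by simpa using hpb) h).symm
      simp only [h, decide_false, Bool.false_eq_true, if_false, Bool.not_false,
        decide_not, if_true, List.map_cons, List.prod_cons]
      rw [← mul_assoc, hcomm.eq, mul_assoc]

theorem prod_expand {α : Type*} [DecidableEq α] {R : Type*} [Ring R] (l : List α)
    (hl : l.Nodup) (f g : α → R) (hfg : ∀ e, f e = 1 + g e) :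
    (l.map f).prod =
      ∑ S ∈ l.toFinset.powerset, ((l.filter (· ∈ S)).map g).prod := by
  induction l with
  | nil => simp
  | cons a t ih =>
    have ha : a ∉ t := by simp [List.nodup_cons] at hl; exact hl.1
    have hat : a ∉ t.toFinset := by simpa using ha
    have ht : t.Nodup := (List.nodup_cons.1 hl).2
    rw [List.map_cons, List.prod_cons, ih ht, hfg a]
    rw [List.toFinset_cons, Finset.sum_powerset_insert hat]
    have e1 : ∀ S ∈ t.toFinset.powerset,
        (((a :: t).filter (· ∈ S)).map g).prod = ((t.filter (· ∈ S)).map g).prod := by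
      intro S hS
      rw [Finset.mem_powerset] at hS
      have haS : a ∉ S := fun h => hat (hS h)
      rw [List.filter_cons]
      simp [haS]
    have e2 : ∀ S ∈ t.toFinset.powerset,
        (((a :: t).filter (· ∈ insert a S)).map g).prod =
          g a * ((t.filter (· ∈ S)).map g).prod := by
      intro S hS
      rw [Finset.mem_powerset] at hS
      rw [List.filter_cons]
      have : ∀ b ∈ t, (decide (b ∈ insert a S)) = (decide (b ∈ S)) := by
        intro b hb
        have hba : b ≠ a := fun h => ha (h ▸ hb)
        simp [Finset.mem_insert, hba]
      rw [List.filter_congr this]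
      simp
    rw [Finset.sum_congr rfl e1, Finset.sum_congr rfl e2, add_mul, one_mul,
      Finset.mul_sum]

end ListLemmas

section SortLemmas
variable [LinearOrder Eg]

theorem sort_filter_eq {S T : Finset Eg} (hTS : T ⊆ S) :
    (S.sort (· ≤ ·)).filter (· ∈ T) = T.sort (· ≤ ·) := by
  have h1 : ((S.sort (· ≤ ·)).filter (· ∈ T)).Pairwise (· ≤ ·) :=
    (S.pairwise_sort _).sublist List.filter_sublist
  have h2 : (T.sort (· ≤ ·)).Pairwise (· ≤ ·) := T.pairwise_sort _
  refine List.Perm.eq_of_pairwise' h1 h2 ?_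
  rw [List.perm_ext_iff_of_nodup ((S.sort_nodup _).sublist List.filter_sublist)
    (T.sort_nodup _)]
  intro a
  simp only [List.mem_filter, Finset.mem_sort, decide_eq_true_eq]
  exact ⟨fun h => h.2, fun h => ⟨hTS h, h⟩⟩
end SortLemmas

section GraphLemmas
variable [DecidableEq V] [DecidableEq Eg] (edge : Eg → Finset V)

theorem rel_symm (S : Finset Eg) :
    Symmetric (fun x y => x ∈ S ∧ y ∈ S ∧ (edge x ∩ edge y).Nonempty) := by
  rintro a b ⟨ha, hb, hab⟩
  exact ⟨hb, ha, by rwa [Finset.inter_comm]⟩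

theorem connected_single (e : Eg) : ConnectedSub edge {e} := by
  refine ⟨⟨e, Finset.mem_singleton_self e⟩, ?_⟩
  intro a ha b hb
  rw [Finset.mem_singleton] at ha hb
  subst ha; subst hb
  exact Relation.ReflTransGen.refl

theorem conn_union {γ1 γ2 : Finset Eg} (h1 : ConnectedSub edge γ1)
    (h2 : ConnectedSub edge γ2) {e f : Eg} (he : e ∈ γ1) (hf : f ∈ γ2)
    (hef : (edge e ∩ edge f).Nonempty) : ConnectedSub edge (γ1 ∪ γ2) := by
  set U := γ1 ∪ γ2 with hU
  set r := fun x y => x ∈ U ∧ y ∈ U ∧ (edge x ∩ edge y).Nonempty with hr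
  have hmono1 : ∀ a b, Relation.ReflTransGen
      (fun x y => x ∈ γ1 ∧ y ∈ γ1 ∧ (edge x ∩ edge y).Nonempty) a b →
      Relation.ReflTransGen r a b :=
    fun a b h => Relation.ReflTransGen.mono
      (r := fun x y => x ∈ γ1 ∧ y ∈ γ1 ∧ (edge x ∩ edge y).Nonempty) (p := r)
      (by rintro x y ⟨hx, hy, hxy⟩
          exact ⟨Finset.mem_union_left _ hx, Finset.mem_union_left _ hy, hxy⟩) a b h
  have hmono2 : ∀ a b, Relation.ReflTransGen
      (fun x y => x ∈ γ2 ∧ y ∈ γ2 ∧ (edge x ∩ edge y).Nonempty) a b →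
      Relation.ReflTransGen r a b :=
    fun a b h => Relation.ReflTransGen.mono
      (r := fun x y => x ∈ γ2 ∧ y ∈ γ2 ∧ (edge x ∩ edge y).Nonempty) (p := r)
      (by rintro x y ⟨hx, hy, hxy⟩
          exact ⟨Finset.mem_union_right _ hx, Finset.mem_union_right _ hy, hxy⟩) a b h
  have hstep : Relation.ReflTransGen r e f :=
    Relation.ReflTransGen.single
      ⟨Finset.mem_union_left _ he, Finset.mem_union_right _ hf, hef⟩
  have hsym : Symmetric (Relation.ReflTransGen r) :=
    by haveI : Std.Symm r := ⟨fun x y hxy => rel_symm edge U hxy⟩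
       exact fun a b h => Std.Symm.symm a b h
  have reach : ∀ a ∈ U, Relation.ReflTransGen r a e := by
    intro a ha
    rcases Finset.mem_union.1 ha with ha1 | ha2
    · exact hmono1 a e (h1.2 a ha1 e he)
    · exact (hmono2 a f (h2.2 a ha2 f hf)).trans (hsym hstep)
  refine ⟨⟨e, Finset.mem_union_left _ he⟩, ?_⟩
  intro a ha b hb
  exact (reach a ha).trans (hsym (reach b hb))

theorem exists_component {S : Finset Eg} {e : Eg} (he : e ∈ S) :
    ∃ γ, e ∈ γ ∧ IsComponent edge S γ := by
  classical
  set F := S.powerset.filter (fun T => e ∈ T ∧ ConnectedSub edge T) with hF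
  have hne : F.Nonempty := by
    refine ⟨{e}, ?_⟩
    simp only [hF, Finset.mem_filter, Finset.mem_powerset]
    exact ⟨Finset.singleton_subset_iff.2 he, Finset.mem_singleton_self e,
      connected_single edge e⟩
  obtain ⟨γ, hγF, hmax⟩ := Finset.exists_max_image F Finset.card hne
  simp only [hF, Finset.mem_filter, Finset.mem_powerset] at hγF
  obtain ⟨hγS, heγ, hconn⟩ := hγF
  refine ⟨γ, heγ, hγS, hconn, ?_⟩
  intro T' hγT' hT'S hconn'
  refine (Finset.eq_of_subset_of_card_le hγT' ?_).symm
  refine hmax T' ?_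
  simp only [hF, Finset.mem_filter, Finset.mem_powerset]
  exact ⟨hT'S, hγT' heγ, hconn'⟩

/-- distinct vertices of a component are disjoint from the rest -/
theorem component_vertex_disjoint {S γ : Finset Eg} (hγ : IsComponent edge S γ)
    {a b : Eg} (ha : a ∈ γ) (hb : b ∈ S) (hbγ : b ∉ γ) :
    ¬ (edge a ∩ edge b).Nonempty := by
  intro hab
  have hconn : ConnectedSub edge (γ ∪ {b}) :=
    conn_union edge hγ.2.1 (connected_single edge b) ha (Finset.mem_singleton_self b) hab
  have hsub : γ ∪ {b} ⊆ S := Finset.union_subset hγ.1 (Finset.singleton_subset_iff.2 hb)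
  have := hγ.2.2 (γ ∪ {b}) Finset.subset_union_left hsub hconn
  exact hbγ (this ▸ Finset.mem_union_right γ (Finset.mem_singleton_self b))

theorem component_sdiff_iff {S γ : Finset Eg} (hγ : IsComponent edge S γ)
    (hneE : ∀ e : Eg, (edge e).Nonempty) (T : Finset Eg) :
    IsComponent edge (S \ γ) T ↔ (IsComponent edge S T ∧ T ≠ γ) := by
  constructor
  · rintro ⟨hTsub, hTconn, hTmax⟩
    have hTS : T ⊆ S := hTsub.trans (Finset.sdiff_subset)
    have hTne : T ≠ γ := by
      rintro rfl
      obtain ⟨a, haT⟩ := hTconn.1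
      exact (Finset.mem_sdiff.1 (hTsub haT)).2 haT
    refine ⟨⟨hTS, hTconn, ?_⟩, hTne⟩
    intro T' hTT' hT'S hT'conn
    refine hTmax T' hTT' ?_ hT'conn
    -- T' ⊆ S \ γ : else T' meets γ, union connected, contradiction
    intro x hx
    rw [Finset.mem_sdiff]
    refine ⟨hT'S hx, ?_⟩
    intro hxγ
    -- T' ∪ γ is connected, contains γ, ⊆ S ⇒ = γ ⇒ T ⊆ γ, but T ⊆ S\γ nonempty
    have hconn : ConnectedSub edge (T' ∪ γ) :=
      conn_union edge hT'conn hγ.2.1 hx hxγ (by rw [Finset.inter_self]; exact hneE x)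
    have hsub : T' ∪ γ ⊆ S := Finset.union_subset hT'S hγ.1
    have hUγ : T' ∪ γ = γ := by
      have := hγ.2.2 (T' ∪ γ) Finset.subset_union_right hsub hconn
      exact this
    have hT'γ : T' ⊆ γ := by rw [← hUγ]; exact Finset.subset_union_left
    obtain ⟨a, haT⟩ := hTconn.1
    exact (Finset.mem_sdiff.1 (hTsub haT)).2 (hT'γ (hTT' haT))
  · rintro ⟨⟨hTS, hTconn, hTmax⟩, hTne⟩
    have hdisj : ∀ x ∈ T, x ∉ γ := by
      intro x hxT hxγ
      have hconn : ConnectedSub edge (T ∪ γ) :=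
        conn_union edge hTconn hγ.2.1 hxT hxγ (by rw [Finset.inter_self]; exact hneE x)
      have hsub : T ∪ γ ⊆ S := Finset.union_subset hTS hγ.1
      have h1 : T ∪ γ = T := hTmax _ Finset.subset_union_left hsub hconn
      have h2 : T ∪ γ = γ := hγ.2.2 _ Finset.subset_union_right hsub hconn
      exact hTne (h1 ▸ h2)
    refine ⟨fun x hx => Finset.mem_sdiff.2 ⟨hTS hx, hdisj x hx⟩, hTconn, ?_⟩
    intro T' hTT' hT'S hT'conn
    exact hTmax T' hTT' (hT'S.trans Finset.sdiff_subset) hT'conn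

theorem comp_insert [Fintype Eg] {S γ : Finset Eg} (hγ : IsComponent edge S γ)
    (hneE : ∀ e : Eg, (edge e).Nonempty) :
    comp edge S = insert γ (comp edge (S \ γ)) ∧ γ ∉ comp edge (S \ γ) := by
  constructor
  · ext T
    simp only [comp, Finset.mem_filter, Finset.mem_univ, true_and, Finset.mem_insert,
      component_sdiff_iff edge hγ hneE]
    constructor
    · intro hT
      by_cases h : T = γ
      · exact Or.inl h
      · exact Or.inr ⟨hT, h⟩
    · rintro (rfl | ⟨hT, _⟩)
      · exact hγ
      · exact hT
  · simp only [comp, Finset.mem_filter, Finset.mem_univ, true_and,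
      component_sdiff_iff edge hγ hneE]
    rintro ⟨_, h⟩
    exact h rfl

theorem comp_empty [Fintype Eg] : comp edge (∅ : Finset Eg) = ∅ := by
  ext T
  simp only [comp, Finset.mem_filter, Finset.mem_univ, true_and, Finset.notMem_empty,
    iff_false]
  rintro ⟨hsub, ⟨⟨a, ha⟩, _⟩, _⟩
  exact Finset.notMem_empty a (hsub ha)

end GraphLemmas

section Main

variable [DecidableEq V] [Fintype V] [LinearOrder Eg] {dim : V → ℕ}

theorem list_lift (T : Finset V) (l : List Eg)
    (g : Eg → Matrix (Loc dim T) (Loc dim T) ℂ)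
    (f : Eg → Matrix (Glob dim) (Glob dim) ℂ)
    (h : ∀ e ∈ l, f e = liftGlobal dim T (g e)) :
    (l.map f).prod = liftGlobal dim T ((l.map g).prod) := by
  induction l with
  | nil => simp [liftGlobal_one]
  | cons a t ih =>
    simp only [List.map_cons, List.prod_cons]
    rw [h a List.mem_cons_self, ih (fun e he => h e (List.mem_cons_of_mem a he)),
      liftGlobal_mul]

theorem key_sum [Fintype Eg] (edge : Eg → Finset V) (hne : ∀ e : Eg, (edge e).Nonempty)
    (hd : ∀ v, 0 < dim v)
    (A : ∀ e : Eg, Matrix (Loc dim (edge e)) (Loc dim (edge e)) ℂ)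
    (S : Finset Eg) :
    (oprod S (fun e => liftGlobal dim (edge e) (A e - 1)))
        (fun v => ⟨0, hd v⟩) (fun v => ⟨0, hd v⟩) =
      ∏ γ ∈ comp edge S, weight edge dim hd A γ := by
  classical
  induction S using Finset.strongInduction with
  | _ S ih =>
  rcases S.eq_empty_or_nonempty with rfl | ⟨e, he⟩
  · rw [comp_empty]
    simp [oprod, Finset.sort_empty, Matrix.one_apply]
  · obtain ⟨γ, heγ, hγ⟩ := exists_component edge he
    have hγS : γ ⊆ S := hγ.1
    have hγne : γ.Nonempty := hγ.2.1.1
    set M : Eg → Matrix (Glob dim) (Glob dim) ℂ :=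
      fun e => liftGlobal dim (edge e) (A e - 1) with hM
    have hdisT : ∀ v, v ∈ vertexSet edge γ → v ∉ vertexSet edge (S \ γ) := by
      intro v hv1 hv2
      rw [Finset.mem_biUnion] at hv1 hv2
      obtain ⟨a, haγ, hva⟩ := hv1
      obtain ⟨b, hbS, hvb⟩ := hv2
      rw [Finset.mem_sdiff] at hbS
      exact component_vertex_disjoint edge hγ haγ hbS.1 hbS.2
        ⟨v, Finset.mem_inter.2 ⟨hva, hvb⟩⟩
    -- split the ordered product
    have hsplit : oprod S M = oprod γ M * oprod (S \ γ) M := by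
      have hc : ∀ a ∈ S.sort (· ≤ ·), ∀ b ∈ S.sort (· ≤ ·),
          a ∈ γ → ¬ b ∈ γ → Commute (M a) (M b) := by
        intro a ha b hb haγ hbγ
        rw [Finset.mem_sort] at ha hb
        refine liftGlobal_commute ?_ _ _
        intro v hva hvb
        exact hdisT v (Finset.mem_biUnion.2 ⟨a, haγ, hva⟩)
          (Finset.mem_biUnion.2 ⟨b, Finset.mem_sdiff.2 ⟨hb, hbγ⟩, hvb⟩)
      have := prod_filter_split (· ∈ γ) (S.sort (· ≤ ·)) M hc
      rw [oprod, this, sort_filter_eq hγS]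
      have hfc : ((S.sort (· ≤ ·)).filter (fun a => ¬ a ∈ γ)) =
          ((S.sort (· ≤ ·)).filter (· ∈ S \ γ)) := by
        refine List.filter_congr ?_
        intro x hx
        rw [Finset.mem_sort] at hx
        simp [Finset.mem_sdiff, hx]
      rw [hfc, sort_filter_eq Finset.sdiff_subset]
      rfl
    -- lift the γ part
    set T1 := vertexSet edge γ with hT1
    set T2 := vertexSet edge (S \ γ) with hT2
    set gγ : Eg → Matrix (Loc dim T1) (Loc dim T1) ℂ := fun e =>
      if he : e ∈ γ then
        (liftMat (Finset.subset_biUnion_of_mem edge he) (A e) - 1 :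
          Matrix (Loc dim T1) (Loc dim T1) ℂ)
      else 1 with hgγ
    set gδ : Eg → Matrix (Loc dim T2) (Loc dim T2) ℂ := fun e =>
      if he : e ∈ S \ γ then
        (liftMat (Finset.subset_biUnion_of_mem edge he) (A e) - 1 :
          Matrix (Loc dim T2) (Loc dim T2) ℂ)
      else 1 with hgδ
    have hlift1 : oprod γ M = liftGlobal dim T1 (oprod γ gγ) := by
      refine list_lift T1 (γ.sort (· ≤ ·)) gγ M ?_
      intro a ha
      rw [Finset.mem_sort] at ha
      rw [hgγ]
      simp only [ha, dif_pos]
      rw [liftGlobal_sub_one, liftGlobal_liftMat,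
        show M a = liftGlobal dim (edge a) (A a - 1) from rfl, liftGlobal_sub_one]
    have hlift2 : oprod (S \ γ) M = liftGlobal dim T2 (oprod (S \ γ) gδ) := by
      refine list_lift T2 ((S \ γ).sort (· ≤ ·)) gδ M ?_
      intro a ha
      rw [Finset.mem_sort] at ha
      rw [hgδ]
      simp only [ha, dif_pos]
      rw [liftGlobal_sub_one, liftGlobal_liftMat,
        show M a = liftGlobal dim (edge a) (A a - 1) from rfl, liftGlobal_sub_one]
    rw [hsplit, hlift1, hlift2, liftGlobal_mul_disjoint hdisT]
    rw [if_pos (fun v _ _ => rfl)]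
    -- identify the two factors
    have hw : (oprod γ gγ) (fun v : T1 => (fun v : V => (⟨0, hd v⟩ : Fin (dim v))) ↑v)
        (fun v : T1 => (fun v : V => (⟨0, hd v⟩ : Fin (dim v))) ↑v) =
        weight edge dim hd A γ := rfl
    have hrest : (oprod (S \ γ) gδ)
        (fun v : T2 => (fun v : V => (⟨0, hd v⟩ : Fin (dim v))) ↑v)
        (fun v : T2 => (fun v : V => (⟨0, hd v⟩ : Fin (dim v))) ↑v) =
        ∏ δ ∈ comp edge (S \ γ), weight edge dim hd A δ := by
      rw [← ih (S \ γ) (Finset.sdiff_ssubset hγS hγne), hlift2,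
        liftGlobal_apply_diag]
    rw [hw, hrest]
    obtain ⟨hcomp, hnotmem⟩ := comp_insert edge hγ hne
    rw [hcomp, Finset.prod_insert hnotmem, one_mul]

end Main

/-- **Lemma 6 of the paper.** The probability amplitude
`A_{U_G} = ⟨0^{|V|}| Π_{ε∈E} U_ε |0^{|V|}⟩` of a quantum circuit on a multihypergraph
admits the abstract polymer model representation
`A_{U_G} = Σ_{S ⊆ E} Π_{γ ∈ comp(S)} w_γ`. -/
theorem amplitude_polymer_representation [DecidableEq V] [Fintype V]
    [LinearOrder Eg] [Fintype Eg]
    (edge : Eg → Finset V) (hne : ∀ e : Eg, (edge e).Nonempty)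
    (dim : V → ℕ) (hd : ∀ v, 0 < dim v)
    (A : ∀ e : Eg, Matrix (Loc dim (edge e)) (Loc dim (edge e)) ℂ)
    (hunitary : ∀ e : Eg, (A e)ᴴ * A e = 1) :
    (oprod Finset.univ (fun e => liftGlobal dim (edge e) (A e)))
        (fun v => ⟨0, hd v⟩) (fun v => ⟨0, hd v⟩) =
      ∑ S : Finset Eg, ∏ γ ∈ comp edge S, weight edge dim hd A γ := by
  classical
  set f : Eg → Matrix (Glob dim) (Glob dim) ℂ :=
    fun e => liftGlobal dim (edge e) (A e) with hf
  set g : Eg → Matrix (Glob dim) (Glob dim) ℂ :=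
    fun e => liftGlobal dim (edge e) (A e - 1) with hg
  have hfg : ∀ e, f e = 1 + g e := by
    intro e
    show liftGlobal dim (edge e) (A e) = 1 + liftGlobal dim (edge e) (A e - 1)
    rw [liftGlobal_sub_one]
    abel
  have hexp := prod_expand (Finset.univ.sort (· ≤ ·) : List Eg)
    (Finset.sort_nodup _ _) f g hfg
  have hop : oprod Finset.univ f = ((Finset.univ.sort (· ≤ ·)).map f).prod := rfl
  rw [hop, hexp, Finset.sort_toFinset, Finset.powerset_univ]
  rw [Matrix.sum_apply]
  refine Finset.sum_congr rfl fun S _ => ?_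
  rw [sort_filter_eq (Finset.subset_univ S)]
  have : ((S.sort (· ≤ ·)).map g).prod = oprod S g := rfl
  rw [this, hg]
  exact key_sum edge hne hd A S

end Stmt9
end
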